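/- arXiv:2404.10191 — 10 statements merged into one kernel-verified Lean document; each statement's English description precedes it below -/
import Mathlib

section
/- Let P be a symmetric positive definite n×n real matrix, R a symmetric positive definite m×m real matrix, and H an m×n real matrix, and let K* = P·Hᵀ·(H·P·Hᵀ + R)⁻¹ be the Kalman gain. Then for every n×m real matrix K, one has the identity P_K - P_{K*} = (K - K*)·(H·P·Hᵀ + R)·(K - K*)ᵀ. -/
open Matrix

/-- The posterior covariance matrix `P_K = (I - K·H)·P·(I - K·H)ᵀ + K·R·Kᵀ`. -/
noncomputable def postCov {n m : ℕ} (P : Matrix (Fin n) (Fin n) ℝ)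
    (R : Matrix (Fin m) (Fin m) ℝ) (H : Matrix (Fin m) (Fin n) ℝ)
    (K : Matrix (Fin n) (Fin m) ℝ) : Matrix (Fin n) (Fin n) ℝ :=
  (1 - K * H) * P * (1 - K * H)ᵀ + K * R * Kᵀ

/-- The Kalman gain `K* = P·Hᵀ·(H·P·Hᵀ + R)⁻¹`. -/
noncomputable def kalmanGain {n m : ℕ} (P : Matrix (Fin n) (Fin n) ℝ)
    (R : Matrix (Fin m) (Fin m) ℝ) (H : Matrix (Fin m) (Fin n) ℝ) :
    Matrix (Fin n) (Fin m) ℝ :=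
  P * Hᵀ * (H * P * Hᵀ + R)⁻¹

theorem postCov_sub_postCov_kalmanGain {n m : ℕ} (P : Matrix (Fin n) (Fin n) ℝ)
    (R : Matrix (Fin m) (Fin m) ℝ) (H : Matrix (Fin m) (Fin n) ℝ)
    (hP : P.PosDef) (hR : R.PosDef) (K : Matrix (Fin n) (Fin m) ℝ) :
    postCov P R H K - postCov P R H (kalmanGain P R H) =
      (K - kalmanGain P R H) * (H * P * Hᵀ + R) * (K - kalmanGain P R H)ᵀ := by
  set S : Matrix (Fin m) (Fin m) ℝ := H * P * Hᵀ + R with hSdef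
  set Ks : Matrix (Fin n) (Fin m) ℝ := kalmanGain P R H with hKs
  have hPT : Pᵀ = P := by
    have := hP.isHermitian; rwa [IsHermitian, conjTranspose_eq_transpose_of_trivial] at this
  have hRT : Rᵀ = R := by
    have := hR.isHermitian; rwa [IsHermitian, conjTranspose_eq_transpose_of_trivial] at this
  have hSpd : S.PosDef := by
    have h1 : (H * P * Hᵀ).PosSemidef := by
      have := hP.posSemidef.mul_mul_conjTranspose_same H
      rwa [conjTranspose_eq_transpose_of_trivial] at this
    exact Matrix.PosDef.posSemidef_add h1 hR
  have hST : Sᵀ = S := by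
    simp [hSdef, transpose_add, transpose_mul, hPT, hRT, Matrix.mul_assoc]
  have h1 : Ks * S = P * Hᵀ := by
    rw [hKs, kalmanGain, Matrix.mul_assoc, Matrix.nonsing_inv_mul _ (isUnit_iff_ne_zero.mpr hSpd.det_pos.ne'), Matrix.mul_one]
  have h2 : S * Ksᵀ = H * P := by
    have := congrArg transpose h1
    rw [transpose_mul, hST] at this
    rw [this]; simp [transpose_mul, hPT]
  have expand : ∀ X : Matrix (Fin n) (Fin m) ℝ,
      postCov P R H X = P - X * (H * P) - P * Hᵀ * Xᵀ + X * S * Xᵀ := by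
    intro X
    rw [postCov, hSdef]
    simp only [transpose_sub, transpose_mul, transpose_one, hPT, Matrix.mul_sub, Matrix.sub_mul,
      Matrix.mul_add, Matrix.add_mul, Matrix.mul_one, Matrix.one_mul, Matrix.mul_assoc]
    abel
  rw [expand K, expand Ks]
  have hKsHP : Ks * (H * P) = P * Hᵀ * Ksᵀ := by rw [← h2, ← Matrix.mul_assoc, h1]
  have e1 : Ks * S * Ksᵀ = P * Hᵀ * Ksᵀ := by rw [h1]
  have e2 : K * S * Ksᵀ = K * (H * P) := by rw [Matrix.mul_assoc, h2]
  rw [hKsHP, e1]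
  have rhs : (K - Ks) * S * (K - Ks)ᵀ =
      K * S * Kᵀ - K * (H * P) - P * Hᵀ * Kᵀ + P * Hᵀ * Ksᵀ := by
    simp only [transpose_sub, Matrix.sub_mul, Matrix.mul_sub]
    rw [e2, e1, h1]
    abel
  rw [rhs]
  abel
end

section
/- Let P be a symmetric positive definite n×n real matrix, R a symmetric positive definite m×m real matrix, and H an m×n real matrix, and let K* = P·Hᵀ·(H·P·Hᵀ + R)⁻¹ be the Kalman gain. Then for every n×m real matrix K, the difference P_K - P_{K*} is positive semidefinite, i.e. P_{K*} ≤ P_K in the Loewner order. -/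
open Matrix

theorem postCov_kalmanGain_le {n m : ℕ} (P : Matrix (Fin n) (Fin n) ℝ)
    (R : Matrix (Fin m) (Fin m) ℝ) (H : Matrix (Fin m) (Fin n) ℝ)
    (hP : P.PosDef) (hR : R.PosDef) (K : Matrix (Fin n) (Fin m) ℝ) :
    (postCov P R H K - postCov P R H (kalmanGain P R H)).PosSemidef := by
  set S : Matrix (Fin m) (Fin m) ℝ := H * P * Hᵀ + R with hSdef
  have hPT : Pᵀ = P := by
    have := hP.isHermitian.eq
    rwa [conjTranspose_eq_transpose_of_trivial] at this
  have hS : S.PosDef := by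
    have h1 : (H * P * Hᴴ).PosSemidef := hP.posSemidef.mul_mul_conjTranspose_same H
    rw [conjTranspose_eq_transpose_of_trivial] at h1
    exact Matrix.PosDef.posSemidef_add h1 hR
  have hST : Sᵀ = S := by
    have := hS.isHermitian.eq
    rwa [conjTranspose_eq_transpose_of_trivial] at this
  have hSunit : IsUnit S.det := isUnit_iff_ne_zero.mpr (ne_of_gt hS.det_pos)
  have hSinvT : S⁻¹ᵀ = S⁻¹ := by rw [transpose_nonsing_inv, hST]
  set Ks : Matrix (Fin n) (Fin m) ℝ := kalmanGain P R H with hKs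
  have hKsS : Ks * S = P * Hᵀ := by
    rw [hKs, kalmanGain, ← hSdef, Matrix.mul_assoc, Matrix.nonsing_inv_mul S hSunit, Matrix.mul_one]
  have hKsT : Ksᵀ = S⁻¹ * (H * P) := by
    rw [hKs, kalmanGain, ← hSdef, transpose_mul, transpose_mul, hSinvT, transpose_transpose,
      hPT]
  have hSKsT : S * Ksᵀ = H * P := by
    rw [hKsT, ← Matrix.mul_assoc, Matrix.mul_nonsing_inv S hSunit, Matrix.one_mul]
  have expand : ∀ L : Matrix (Fin n) (Fin m) ℝ,
      postCov P R H L = P - L * (H * P) - P * Hᵀ * Lᵀ + L * S * Lᵀ := by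
    intro L
    simp only [postCov, hSdef, transpose_sub, transpose_one, transpose_mul,
      Matrix.sub_mul, Matrix.mul_sub, Matrix.add_mul, Matrix.mul_add, Matrix.one_mul,
      Matrix.mul_one, hPT, Matrix.mul_assoc]
    abel
  have key : postCov P R H K - postCov P R H Ks = (K - Ks) * S * (K - Ks)ᵀ := by
    rw [expand K, expand Ks]
    have e1 : P * Hᵀ * Ksᵀ = Ks * (H * P) := by rw [← hKsS, Matrix.mul_assoc, hSKsT]
    simp only [transpose_sub, Matrix.sub_mul, Matrix.mul_sub]
    rw [Matrix.mul_assoc K S Ksᵀ, hSKsT, hKsS, e1]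
    abel
  rw [key]
  have h := hS.posSemidef.mul_mul_conjTranspose_same (K - Ks)
  rwa [conjTranspose_eq_transpose_of_trivial] at h
end

section
/- Let P be a symmetric positive definite n×n real matrix, R a symmetric positive definite m×m real matrix, and H an m×n real matrix, and let K* = P·Hᵀ·(H·P·Hᵀ + R)⁻¹ be the Kalman gain. Then the Fréchet derivative of the map K ↦ P_K (from n×m real matrices to n×n real matrices) at the point K* is the zero linear map; i.e., K* is a critical point of K ↦ P_K. -/
open Matrix

attribute [local instance] Matrix.normedAddCommGroup Matrix.normedSpace

lemma postCov_sq {n m : ℕ} (P : Matrix (Fin n) (Fin n) ℝ)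
    (R : Matrix (Fin m) (Fin m) ℝ) (H : Matrix (Fin m) (Fin n) ℝ)
    (hP : P.PosDef) (hR : R.PosDef) (K : Matrix (Fin n) (Fin m) ℝ) :
    postCov P R H K = (K - kalmanGain P R H) * (H * P * Hᵀ + R) *
      (K - kalmanGain P R H)ᵀ + postCov P R H (kalmanGain P R H) := by
  have hPt : Pᵀ = P := by
    have := hP.isHermitian
    rwa [Matrix.IsHermitian, conjTranspose_eq_transpose_of_trivial] at this
  have hS : (H * P * Hᵀ + R).PosDef :=
    Matrix.PosDef.posSemidef_add
      (by simpa [conjTranspose_eq_transpose_of_trivial, hPt] using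
        hP.posSemidef.mul_mul_conjTranspose_same H) hR
  set S := H * P * Hᵀ + R with hSdef
  set K0 := kalmanGain P R H with hK0
  have hSt : Sᵀ = S := by
    have := hS.isHermitian
    rwa [Matrix.IsHermitian, conjTranspose_eq_transpose_of_trivial] at this
  have hSunit : IsUnit S.det := isUnit_iff_ne_zero.mpr hS.det_pos.ne'
  have hKS : K0 * S = P * Hᵀ := by
    rw [hK0, kalmanGain, ← hSdef, Matrix.mul_assoc, Matrix.nonsing_inv_mul _ hSunit,
      Matrix.mul_one]
  have hSKT : S * K0ᵀ = H * P := by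
    have h := congrArg Matrix.transpose hKS
    rw [Matrix.transpose_mul, hSt] at h
    rw [h, Matrix.transpose_mul, Matrix.transpose_transpose, hPt]
  have expand : ∀ L : Matrix (Fin n) (Fin m) ℝ,
      postCov P R H L = P - L * (H * P) - P * Hᵀ * Lᵀ + L * S * Lᵀ := by
    intro L
    simp only [postCov, hSdef, Matrix.sub_mul, Matrix.mul_sub, Matrix.mul_add,
      Matrix.add_mul, Matrix.transpose_sub, Matrix.transpose_mul, Matrix.transpose_one,
      Matrix.one_mul, Matrix.mul_one, hPt, Matrix.mul_assoc]
    abel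
  rw [expand K, expand K0]
  have h1 : K * (S * K0ᵀ) = K * (H * P) := by rw [hSKT]
  have h2 : K0 * (S * Kᵀ) = P * (Hᵀ * Kᵀ) := by
    rw [← Matrix.mul_assoc, hKS, Matrix.mul_assoc]
  have h3 : K0 * (S * K0ᵀ) = K0 * (H * P) := by rw [hSKT]
  simp only [Matrix.sub_mul, Matrix.mul_sub, Matrix.transpose_sub, Matrix.mul_assoc]
  have h4 : K0 * (H * P) = P * (Hᵀ * K0ᵀ) := by
    rw [← hSKT, ← Matrix.mul_assoc, hKS, Matrix.mul_assoc]
  rw [h1, h2, h3, h4]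
  abel

theorem fderiv_postCov_kalmanGain {n m : ℕ} (P : Matrix (Fin n) (Fin n) ℝ)
    (R : Matrix (Fin m) (Fin m) ℝ) (H : Matrix (Fin m) (Fin n) ℝ)
    (hP : P.PosDef) (hR : R.PosDef) :
    fderiv ℝ (fun K : Matrix (Fin n) (Fin m) ℝ => postCov P R H K)
      (kalmanGain P R H) = 0 := by
  set S := H * P * Hᵀ + R with hSdef
  set K0 := kalmanGain P R H with hK0
  let L1 : Matrix (Fin n) (Fin m) ℝ →ₗ[ℝ] Matrix (Fin n) (Fin m) ℝ →ₗ[ℝ]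
      Matrix (Fin n) (Fin n) ℝ :=
    LinearMap.mk₂ ℝ (fun X Y => X * S * Yᵀ)
      (fun X X' Y => by simp [Matrix.add_mul])
      (fun c X Y => by simp [Matrix.smul_mul])
      (fun X Y Y' => by simp [Matrix.transpose_add, Matrix.mul_add])
      (fun c X Y => by simp [Matrix.transpose_smul, Matrix.mul_smul])
  let L2 : Matrix (Fin n) (Fin m) ℝ →ₗ[ℝ] (Matrix (Fin n) (Fin m) ℝ →L[ℝ]
      Matrix (Fin n) (Fin n) ℝ) :=
    { toFun := fun X => LinearMap.toContinuousLinearMap (L1 X),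
      map_add' := fun X X' => by ext Y; simp
      map_smul' := fun c X => by ext Y; simp }
  let B : Matrix (Fin n) (Fin m) ℝ →L[ℝ] Matrix (Fin n) (Fin m) ℝ →L[ℝ]
      Matrix (Fin n) (Fin n) ℝ := LinearMap.toContinuousLinearMap L2
  have hB : IsBoundedBilinearMap ℝ fun p : Matrix (Fin n) (Fin m) ℝ ×
      Matrix (Fin n) (Fin m) ℝ => p.1 * S * p.2ᵀ := B.isBoundedBilinearMap
  have hquad : HasFDerivAt (fun D : Matrix (Fin n) (Fin m) ℝ => D * S * Dᵀ)
      (0 : Matrix (Fin n) (Fin m) ℝ →L[ℝ] Matrix (Fin n) (Fin n) ℝ) 0 := by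
    have hpair : HasFDerivAt (fun D : Matrix (Fin n) (Fin m) ℝ => (D, D))
        ((ContinuousLinearMap.id ℝ _).prod (ContinuousLinearMap.id ℝ _)) 0 :=
      HasFDerivAt.prodMk (hasFDerivAt_id (0 : Matrix (Fin n) (Fin m) ℝ))
        (hasFDerivAt_id (0 : Matrix (Fin n) (Fin m) ℝ))
    have h := HasFDerivAt.comp (f := fun D : Matrix (Fin n) (Fin m) ℝ => (D, D)) 0
      (hB.hasFDerivAt ((0 : Matrix (Fin n) (Fin m) ℝ), (0 : Matrix (Fin n) (Fin m) ℝ))) hpair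
    refine h.congr_fderiv ?_
    ext D : 1
    change (0 : Matrix (Fin n) (Fin m) ℝ) * S * Dᵀ + D * S * (0 : Matrix (Fin n) (Fin m) ℝ)ᵀ = 0
    simp
  have hquad' : HasFDerivAt (fun D : Matrix (Fin n) (Fin m) ℝ => D * S * Dᵀ)
      (0 : Matrix (Fin n) (Fin m) ℝ →L[ℝ] Matrix (Fin n) (Fin n) ℝ) (K0 - K0) := by
    rw [sub_self]; exact hquad
  have hsub : HasFDerivAt (fun K : Matrix (Fin n) (Fin m) ℝ => K - K0)
      (ContinuousLinearMap.id ℝ _) K0 := (hasFDerivAt_id K0).sub_const K0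
  have hshift : HasFDerivAt
      (fun K : Matrix (Fin n) (Fin m) ℝ => (K - K0) * S * (K - K0)ᵀ)
      (0 : Matrix (Fin n) (Fin m) ℝ →L[ℝ] Matrix (Fin n) (Fin n) ℝ) K0 := by
    have h := HasFDerivAt.comp (f := fun K : Matrix (Fin n) (Fin m) ℝ => K - K0) K0
      hquad' hsub
    exact h.congr_fderiv (ContinuousLinearMap.zero_comp _)
  have heq : (fun K : Matrix (Fin n) (Fin m) ℝ => postCov P R H K) =
      fun K => (K - K0) * S * (K - K0)ᵀ + postCov P R H K0 :=
    funext fun K => postCov_sq P R H hP hR K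
  rw [heq]
  exact (hshift.add_const (postCov P R H K0)).fderiv
end

section
/- Let P be a symmetric positive definite n×n real matrix, R a symmetric positive definite m×m real matrix, and H an m×n real matrix, and let K* = P·Hᵀ·(H·P·Hᵀ + R)⁻¹ be the Kalman gain. Then K* minimizes the total posterior variance: for every n×m real matrix K, trace(P_{K*}) ≤ trace(P_K). -/
open Matrix

lemma posSemidef_trace_nonneg {k : ℕ} {A : Matrix (Fin k) (Fin k) ℝ}
    (hA : A.PosSemidef) : 0 ≤ A.trace := by
  rw [Matrix.trace]
  apply Finset.sum_nonneg
  intro i _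
  have h := hA.dotProduct_mulVec_nonneg (Pi.single i 1)
  simpa [dotProduct, Matrix.mulVec, Pi.single_apply, Finset.sum_ite_eq,
    Matrix.diag] using h

theorem trace_postCov_kalmanGain_le {n m : ℕ} (P : Matrix (Fin n) (Fin n) ℝ)
    (R : Matrix (Fin m) (Fin m) ℝ) (H : Matrix (Fin m) (Fin n) ℝ)
    (hP : P.PosDef) (hR : R.PosDef) (K : Matrix (Fin n) (Fin m) ℝ) :
    (postCov P R H (kalmanGain P R H)).trace ≤ (postCov P R H K).trace := by
  set S : Matrix (Fin m) (Fin m) ℝ := H * P * Hᵀ + R with hSdef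
  have hS : S.PosDef :=
    Matrix.PosDef.posSemidef_add (hP.posSemidef.mul_mul_conjTranspose_same H) hR
  set K₀ : Matrix (Fin n) (Fin m) ℝ := kalmanGain P R H with hK0
  have hPt : Pᵀ = P := hP.isHermitian.eq
  have hRt : Rᵀ = R := hR.isHermitian.eq
  have hSt : Sᵀ = S := by
    rw [hSdef, transpose_add, transpose_mul, transpose_mul, transpose_transpose,
      hPt, hRt, Matrix.mul_assoc]
  have hinv : S⁻¹ * S = 1 := Matrix.nonsing_inv_mul S hS.det_pos.ne'.isUnit
  have hKS : K₀ * S = P * Hᵀ := by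
    rw [hK0, kalmanGain, ← hSdef, Matrix.mul_assoc (P * Hᵀ) S⁻¹ S, hinv, Matrix.mul_one]
  have hSK : S * K₀ᵀ = H * P := by
    have h := congrArg transpose hKS
    rw [transpose_mul, hSt, transpose_mul, transpose_transpose, hPt] at h
    exact h
  have expand : ∀ K' : Matrix (Fin n) (Fin m) ℝ,
      postCov P R H K' = P - K' * (H * P) - P * Hᵀ * K'ᵀ + K' * S * K'ᵀ := by
    intro K'
    simp only [postCov, hSdef, transpose_sub, transpose_mul, transpose_one, hPt,
      sub_mul, mul_sub, one_mul, mul_one, add_mul, mul_add, Matrix.sub_mul, Matrix.mul_sub, Matrix.one_mul, Matrix.mul_one, Matrix.add_mul, Matrix.mul_add, Matrix.mul_assoc]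
    abel
  have key : postCov P R H K =
      postCov P R H K₀ + (K - K₀) * S * (K - K₀)ᵀ := by
    have e1 : K * S * K₀ᵀ = K * (H * P) := by rw [Matrix.mul_assoc, hSK]
    have e2 : K₀ * S * Kᵀ = P * Hᵀ * Kᵀ := by rw [hKS]
    have e4 : K₀ * (H * P) = K₀ * S * K₀ᵀ := by rw [Matrix.mul_assoc, hSK]
    have e5 : P * Hᵀ * K₀ᵀ = K₀ * S * K₀ᵀ := by rw [hKS]
    rw [expand K, expand K₀, transpose_sub, Matrix.mul_sub, Matrix.sub_mul, Matrix.sub_mul, Matrix.sub_mul, e1, e2,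
      e4, e5]
    abel
  have htr : 0 ≤ ((K - K₀) * S * (K - K₀)ᵀ).trace :=
    posSemidef_trace_nonneg (hS.posSemidef.mul_mul_conjTranspose_same (K - K₀))
  rw [key, trace_add]
  linarith
end

section
/- Let P be a symmetric positive definite n×n real matrix, R a symmetric positive definite m×m real matrix, and H an m×n real matrix, and let K* = P·Hᵀ·(H·P·Hᵀ + R)⁻¹ be the Kalman gain. Then K* minimizes the posterior generalized variance: for every n×m real matrix K, det(P_{K*}) ≤ det(P_K). -/
open Matrix
open Finset

section Aux

variable {k m n : ℕ}

open scoped MatrixOrder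

lemma psd_det_nonneg {A : Matrix (Fin k) (Fin k) ℝ} (hA : A.PosSemidef) : 0 ≤ A.det := by
  rw [hA.1.det_eq_prod_eigenvalues]
  exact Finset.prod_nonneg fun i _ => hA.eigenvalues_nonneg i

lemma one_le_det_one_add {C : Matrix (Fin k) (Fin k) ℝ} (hC : C.PosSemidef) :
    1 ≤ (1 + C).det := by
  classical
  set U : Matrix (Fin k) (Fin k) ℝ := (hC.1.eigenvectorUnitary : Matrix (Fin k) (Fin k) ℝ)
  have hU : star U * U = 1 := Unitary.coe_star_mul_self _
  have hdiag : star U * C * U = diagonal hC.1.eigenvalues := by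
    simpa using hC.1.conjStarAlgAut_star_eigenvectorUnitary
  have key : star U * (1 + C) * U = diagonal (fun i => 1 + hC.1.eigenvalues i) := by
    rw [Matrix.mul_add, Matrix.add_mul, mul_one, hU, hdiag, ← diagonal_one, diagonal_add]
  have hdet : (1 + C).det = ∏ i, (1 + hC.1.eigenvalues i) := by
    have := congrArg Matrix.det key
    have hU2 : U * star U = 1 := Unitary.coe_mul_star_self _
    rw [det_mul, det_mul, mul_comm, ← mul_assoc, ← det_mul, hU2, det_one, one_mul,
      det_diagonal] at this
    exact this
  rw [hdet]
  calc (1:ℝ) = ∏ _i : Fin k, (1:ℝ) := by simp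
    _ ≤ ∏ i, (1 + hC.1.eigenvalues i) :=
      Finset.prod_le_prod (fun i _ => zero_le_one)
        (fun i _ => by linarith [hC.eigenvalues_nonneg i])

lemma det_le_det_add_psd {A B : Matrix (Fin k) (Fin k) ℝ}
    (hA : A.PosSemidef) (hB : B.PosSemidef) : A.det ≤ (A + B).det := by
  by_cases hdet : A.det = 0
  · rw [hdet]
    exact psd_det_nonneg (hA.add hB)
  · set Q := CFC.sqrt A with hQ
    have hQpsd : Q.PosSemidef := (CFC.sqrt_nonneg A).posSemidef
    have hQQ : Q * Q = A := CFC.sqrt_mul_sqrt_self A hA.nonneg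
    have hQdet : Q.det ≠ 0 := fun h => hdet (by rw [← hQQ, det_mul, h, zero_mul])
    have hQunit : IsUnit Q.det := isUnit_iff_ne_zero.mpr hQdet
    have h1 : Q * Q⁻¹ = 1 := mul_nonsing_inv _ hQunit
    have h2 : Q⁻¹ * Q = 1 := nonsing_inv_mul _ hQunit
    have hQsymm : Qᴴ = Q := hQpsd.1
    have hQinvH : (Q⁻¹)ᴴ = Q⁻¹ := by rw [conjTranspose_nonsing_inv, hQsymm]
    have hCpsd : (Q⁻¹ * B * Q⁻¹).PosSemidef := by
      have := hB.mul_mul_conjTranspose_same Q⁻¹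
      rwa [hQinvH] at this
    have key : A + B = Q * (1 + Q⁻¹ * B * Q⁻¹) * Q := by
      rw [Matrix.mul_add, Matrix.add_mul, mul_one, hQQ]
      congr 1
      symm
      calc Q * (Q⁻¹ * B * Q⁻¹) * Q = (Q * Q⁻¹) * B * (Q⁻¹ * Q) := by
            simp only [Matrix.mul_assoc]
        _ = B := by rw [h1, h2, one_mul, mul_one]
    have hdetA : A.det = Q.det * Q.det := by rw [← hQQ, det_mul]
    rw [key, det_mul, det_mul, hdetA]
    have h1le := one_le_det_one_add hCpsd
    nlinarith [sq_nonneg Q.det]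

end Aux


section Main

variable {n m : ℕ} (P : Matrix (Fin n) (Fin n) ℝ) (R : Matrix (Fin m) (Fin m) ℝ)
  (H : Matrix (Fin m) (Fin n) ℝ)

lemma postCov_posSemidef (hP : P.PosDef) (hR : R.PosDef) (K : Matrix (Fin n) (Fin m) ℝ) :
    (postCov P R H K).PosSemidef := by
  have h1 := hP.posSemidef.mul_mul_conjTranspose_same (1 - K * H)
  have h2 := hR.posSemidef.mul_mul_conjTranspose_same K
  rw [conjTranspose_eq_transpose_of_trivial] at h1 h2
  exact h1.add h2

lemma postCov_kalman_add (hP : P.PosDef) (hR : R.PosDef) (E : Matrix (Fin n) (Fin m) ℝ) :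
    postCov P R H (kalmanGain P R H + E) =
      postCov P R H (kalmanGain P R H) + E * (H * P * Hᵀ + R) * Eᵀ := by
  set K₀ := kalmanGain P R H with hK₀
  have hPt : Pᵀ = P := by
    rw [← conjTranspose_eq_transpose_of_trivial]; exact hP.1
  have hRt : Rᵀ = R := by
    rw [← conjTranspose_eq_transpose_of_trivial]; exact hR.1
  have hSpd : (H * P * Hᵀ + R).PosDef := by
    have h1 := hP.posSemidef.mul_mul_conjTranspose_same H
    rw [conjTranspose_eq_transpose_of_trivial] at h1
    exact Matrix.PosDef.posSemidef_add h1 hR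
  have hSunit : IsUnit (H * P * Hᵀ + R).det := hSpd.det_pos.ne'.isUnit
  have hK₀S : K₀ * (H * P * Hᵀ + R) = P * Hᵀ := by
    rw [hK₀, kalmanGain, Matrix.mul_assoc, nonsing_inv_mul _ hSunit, Matrix.mul_one]
  have hc : (1 - K₀ * H) * (P * Hᵀ) = K₀ * R := by
    have h : K₀ * (H * P * Hᵀ) + K₀ * R = P * Hᵀ := by
      rw [← Matrix.mul_add]; exact hK₀S
    have step1 : (1 - K₀ * H) * (P * Hᵀ) = P * Hᵀ - K₀ * (H * P * Hᵀ) := by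
      rw [Matrix.sub_mul, Matrix.one_mul, Matrix.mul_assoc K₀, ← Matrix.mul_assoc H P Hᵀ]
    calc (1 - K₀ * H) * (P * Hᵀ) = P * Hᵀ - K₀ * (H * P * Hᵀ) := step1
      _ = (K₀ * (H * P * Hᵀ) + K₀ * R) - K₀ * (H * P * Hᵀ) := by rw [← h]
      _ = K₀ * R := by abel
  have hc' : (H * P) * (1 - K₀ * H)ᵀ = R * K₀ᵀ := by
    have := congrArg Matrix.transpose hc
    simp only [transpose_mul, transpose_sub, transpose_one, transpose_transpose, hPt,
      hRt] at this
    simp only [transpose_sub, transpose_one, transpose_mul]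
    exact this
  have expand : postCov P R H (K₀ + E) =
      postCov P R H K₀ + E * (H * P * Hᵀ + R) * Eᵀ +
        ((K₀ * R - (1 - K₀ * H) * (P * Hᵀ)) * Eᵀ +
          E * (R * K₀ᵀ - (H * P) * (1 - K₀ * H)ᵀ)) := by
    simp only [postCov, transpose_sub, transpose_mul, transpose_add, transpose_one,
      transpose_transpose, hPt, hRt, Matrix.add_mul, Matrix.mul_add, Matrix.sub_mul,
      Matrix.mul_sub, Matrix.mul_one, Matrix.one_mul, Matrix.mul_assoc]
    abel
  rw [expand, hc, hc', sub_self, sub_self, Matrix.zero_mul, Matrix.mul_zero, add_zero, add_zero]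

end Main

theorem det_postCov_kalmanGain_le {n m : ℕ} (P : Matrix (Fin n) (Fin n) ℝ)
    (R : Matrix (Fin m) (Fin m) ℝ) (H : Matrix (Fin m) (Fin n) ℝ)
    (hP : P.PosDef) (hR : R.PosDef) (K : Matrix (Fin n) (Fin m) ℝ) :
    (postCov P R H (kalmanGain P R H)).det ≤ (postCov P R H K).det := by
  have hK : K = kalmanGain P R H + (K - kalmanGain P R H) := by abel
  rw [hK, postCov_kalman_add P R H hP hR]
  have hSpd : (H * P * Hᵀ + R).PosDef := by
    have h1 := hP.posSemidef.mul_mul_conjTranspose_same H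
    rw [conjTranspose_eq_transpose_of_trivial] at h1
    exact Matrix.PosDef.posSemidef_add h1 hR
  have hB : ((K - kalmanGain P R H) * (H * P * Hᵀ + R) * (K - kalmanGain P R H)ᵀ).PosSemidef := by
    have := hSpd.posSemidef.mul_mul_conjTranspose_same (K - kalmanGain P R H)
    rwa [conjTranspose_eq_transpose_of_trivial] at this
  exact det_le_det_add_psd (postCov_posSemidef P R H hP hR _) hB
end

section
/- Let P be a symmetric positive definite n×n real matrix, R a symmetric positive definite m×m real matrix, H an m×n real matrix, and K* = P·Hᵀ·(H·P·Hᵀ + R)⁻¹ the Kalman gain. Let λ be a real number strictly smaller than every eigenvalue of P_{K*}. Then for every n×m real matrix K, |det(λ·I - P_{K*})| ≤ |det(λ·I - P_K)|, i.e. the absolute value of the characteristic polynomial of P_K evaluated at λ is minimized at K = K*. -/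
open Matrix
section helpers
variable {n : Type*} [Fintype n] [DecidableEq n]

lemma myPosDef_mul_mul_conjTranspose {A B : Matrix n n ℝ} (hA : A.PosDef)
    (hB : IsUnit B) : (B * A * Bᴴ).PosDef := by
  refine Matrix.PosDef.of_dotProduct_mulVec_pos (Matrix.isHermitian_mul_mul_conjTranspose B hA.1) fun x hx => ?_
  have hBH : IsUnit Bᴴ := by
    rw [Matrix.isUnit_iff_isUnit_det] at hB ⊢
    simpa [Matrix.det_conjTranspose] using hB.star
  have hx' : Bᴴ *ᵥ x ≠ 0 := by
    intro h
    exact hx (by simpa using (Matrix.mulVec_injective_iff_isUnit.mpr hBH) (h.trans (Matrix.mulVec_zero _).symm))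
  have := hA.dotProduct_mulVec_pos hx'
  simpa only [star_mulVec, dotProduct_mulVec, vecMul_vecMul, conjTranspose_conjTranspose,
    Matrix.mul_assoc] using this


lemma herm_sub_smul {A : Matrix n n ℝ} (hA : A.IsHermitian) (lam : ℝ) :
    A - lam • (1 : Matrix n n ℝ) =
      (hA.eigenvectorUnitary : Matrix n n ℝ) *
        diagonal (fun i => hA.eigenvalues i - lam) *
        star (hA.eigenvectorUnitary : Matrix n n ℝ) := by
  have h1 : (hA.eigenvectorUnitary : Matrix n n ℝ) *
      star (hA.eigenvectorUnitary : Matrix n n ℝ) = 1 :=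
    Unitary.mul_star_self_of_mem hA.eigenvectorUnitary.2
  have hd : (diagonal (fun i => hA.eigenvalues i - lam) : Matrix n n ℝ)
      = diagonal (RCLike.ofReal ∘ hA.eigenvalues) - lam • 1 := by
    rw [smul_one_eq_diagonal, ← diagonal_sub]
    congr 1
  rw [hd, Matrix.mul_sub, Matrix.sub_mul,
    ← Unitary.conjStarAlgAut_apply (S := ℝ) hA.eigenvectorUnitary (diagonal _), ← hA.spectral_theorem]
  congr 1
  rw [Matrix.mul_smul, Matrix.mul_one, Matrix.smul_mul, h1]

lemma det_herm_sub_smul {A : Matrix n n ℝ} (hA : A.IsHermitian) (lam : ℝ) :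
    (A - lam • (1 : Matrix n n ℝ)).det = ∏ i, (hA.eigenvalues i - lam) := by
  have h1 : (hA.eigenvectorUnitary : Matrix n n ℝ) *
      star (hA.eigenvectorUnitary : Matrix n n ℝ) = 1 :=
    Unitary.mul_star_self_of_mem hA.eigenvectorUnitary.2
  rw [herm_sub_smul hA lam, det_mul_right_comm, h1, Matrix.one_mul, det_diagonal]

lemma posDef_herm_sub_smul {A : Matrix n n ℝ} (hA : A.IsHermitian) {lam : ℝ}
    (h : ∀ i, lam < hA.eigenvalues i) : (A - lam • (1 : Matrix n n ℝ)).PosDef := by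
  have hdiag : (diagonal (fun i => hA.eigenvalues i - lam) : Matrix n n ℝ).PosDef :=
    posDef_diagonal_iff.mpr fun i => sub_pos.mpr (h i)
  have hU : IsUnit (hA.eigenvectorUnitary : Matrix n n ℝ) :=
    ⟨⟨_, star (hA.eigenvectorUnitary : Matrix n n ℝ),
      Unitary.mul_star_self_of_mem hA.eigenvectorUnitary.2,
      Unitary.star_mul_self_of_mem hA.eigenvectorUnitary.2⟩, rfl⟩
  rw [herm_sub_smul hA lam, Matrix.star_eq_conjTranspose]
  exact myPosDef_mul_mul_conjTranspose hdiag hU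

lemma one_le_det_one_add_s6 {E : Matrix n n ℝ} (hE : E.PosSemidef) :
    1 ≤ (1 + E).det := by
  have h : (1 : Matrix n n ℝ) + E = E - (-1 : ℝ) • 1 := by
    rw [neg_smul, one_smul, sub_neg_eq_add, add_comm]
  rw [h, det_herm_sub_smul hE.1]
  calc (1:ℝ) = ∏ _i : n, 1 := by simp
    _ ≤ ∏ i, (hE.1.eigenvalues i - (-1)) := by
        refine Finset.prod_le_prod (by simp) fun i _ => ?_
        have := hE.eigenvalues_nonneg i
        linarith

open scoped MatrixOrder in
lemma det_le_det_add {A D : Matrix n n ℝ} (hA : A.PosDef) (hD : D.PosSemidef) :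
    A.det ≤ (A + D).det := by
  have hAinv := hA.inv
  set S := CFC.sqrt A⁻¹ with hSdef
  have hS : S.PosSemidef := (CFC.sqrt_nonneg A⁻¹).posSemidef
  have hSsq : S * S = A⁻¹ := by
    rw [← pow_two]; exact CFC.sq_sqrt A⁻¹ hAinv.posSemidef.nonneg
  have hadet : IsUnit A.det := hA.det_pos.ne'.isUnit
  have hcomm : A * S = S * A := by
    have h1 : S * A⁻¹ = A⁻¹ * S := by
      rw [← hSsq, Matrix.mul_assoc]
    calc A * S = A * S * (A⁻¹ * A) := by
            rw [Matrix.nonsing_inv_mul A hadet, Matrix.mul_one]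
      _ = A * (S * A⁻¹) * A := by rw [Matrix.mul_assoc, Matrix.mul_assoc, Matrix.mul_assoc]
      _ = A * (A⁻¹ * S) * A := by rw [h1]
      _ = (A * A⁻¹) * S * A := by rw [Matrix.mul_assoc A A⁻¹ S]
      _ = S * A := by rw [Matrix.mul_nonsing_inv A hadet, Matrix.one_mul]
  have hSAS : S * A * S = 1 := by
    rw [← hcomm, Matrix.mul_assoc, hSsq, Matrix.mul_nonsing_inv A hadet]
  have key : S * (A + D) * S = 1 + S * D * S := by
    rw [Matrix.mul_add, Matrix.add_mul, hSAS]
  have hdet1 : S.det * S.det * (A + D).det = (1 + S * D * S).det := by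
    rw [← key, det_mul, det_mul]; ring
  have hdet2 : S.det * S.det * A.det = 1 := by
    have := congrArg Matrix.det hSAS
    rw [det_mul, det_mul, det_one] at this
    rw [← this]; ring
  have hpos : 0 < S.det * S.det := by
    rcases lt_or_eq_of_le (mul_self_nonneg S.det) with h | h
    · exact h
    · exfalso; rw [← h] at hdet2; simp at hdet2
  have h1 : 1 ≤ (1 + S * D * S).det := by
    apply one_le_det_one_add_s6
    have := hD.mul_mul_conjTranspose_same S
    rwa [hS.isHermitian.eq] at this
  have : S.det * S.det * A.det ≤ S.det * S.det * (A + D).det := by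
    rw [hdet2, hdet1]; exact h1
  exact le_of_mul_le_mul_left this hpos
end helpers

theorem abs_det_charpoly_postCov_kalmanGain_le {n m : ℕ} (P : Matrix (Fin n) (Fin n) ℝ)
    (R : Matrix (Fin m) (Fin m) ℝ) (H : Matrix (Fin m) (Fin n) ℝ)
    (hP : P.PosDef) (hR : R.PosDef)
    (hstar : (postCov P R H (kalmanGain P R H)).IsHermitian)
    (lam : ℝ) (hlam : ∀ i, lam < hstar.eigenvalues i)
    (K : Matrix (Fin n) (Fin m) ℝ) :
    |(lam • (1 : Matrix (Fin n) (Fin n) ℝ) - postCov P R H (kalmanGain P R H)).det| ≤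
      |(lam • (1 : Matrix (Fin n) (Fin n) ℝ) - postCov P R H K).det| := by
  classical
  set G := kalmanGain P R H with hGdef
  set S : Matrix (Fin m) (Fin m) ℝ := H * P * Hᵀ + R with hSdef
  have hHPH : (H * P * Hᵀ).PosSemidef := by
    have := hP.posSemidef.mul_mul_conjTranspose_same H
    rwa [conjTranspose_eq_transpose_of_trivial] at this
  have hS : S.PosDef := Matrix.PosDef.posSemidef_add hHPH hR
  have hSdet : IsUnit S.det := hS.det_pos.ne'.isUnit
  have hSsymm : Sᵀ = S := by
    rw [← conjTranspose_eq_transpose_of_trivial]; exact hS.isHermitian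
  have hPsymm : Pᵀ = P := by
    rw [← conjTranspose_eq_transpose_of_trivial]; exact hP.isHermitian
  have hGS : G * S = P * Hᵀ := by
    rw [hGdef, kalmanGain, ← hSdef, Matrix.mul_assoc, Matrix.nonsing_inv_mul S hSdet,
      Matrix.mul_one]
  have hSGt : S * Gᵀ = H * P := by
    have hGt : Gᵀ = S⁻¹ * (H * P) := by
      rw [hGdef, kalmanGain, ← hSdef, transpose_mul, transpose_mul, transpose_transpose,
        transpose_nonsing_inv, hSsymm, hPsymm]
    rw [hGt, ← Matrix.mul_assoc, Matrix.mul_nonsing_inv S hSdet, Matrix.one_mul]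
  have norm : ∀ K' : Matrix (Fin n) (Fin m) ℝ,
      postCov P R H K' = P - K' * (H * P) - (P * Hᵀ) * K'ᵀ + K' * S * K'ᵀ := by
    intro K'
    rw [postCov, hSdef]
    simp only [transpose_sub, transpose_mul, transpose_one, Matrix.sub_mul, Matrix.mul_sub,
      Matrix.mul_add, Matrix.add_mul, Matrix.one_mul, Matrix.mul_one, Matrix.mul_assoc]
    abel
  have key : postCov P R H K = postCov P R H G + (K - G) * S * (K - G)ᵀ := by
    rw [norm K, norm G, ← hGS, ← hSGt]
    simp only [transpose_sub, Matrix.sub_mul, Matrix.mul_sub, Matrix.mul_assoc]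
    abel
  have hD : ((K - G) * S * (K - G)ᵀ).PosSemidef := by
    have := hS.posSemidef.mul_mul_conjTranspose_same (K - G)
    rwa [conjTranspose_eq_transpose_of_trivial] at this
  have hA : (postCov P R H G - lam • (1 : Matrix (Fin n) (Fin n) ℝ)).PosDef :=
    posDef_herm_sub_smul hstar hlam
  have h1 : lam • (1 : Matrix (Fin n) (Fin n) ℝ) - postCov P R H G =
      -(postCov P R H G - lam • 1) := by rw [neg_sub]
  have h2 : lam • (1 : Matrix (Fin n) (Fin n) ℝ) - postCov P R H K =
      -((postCov P R H G - lam • 1) + (K - G) * S * (K - G)ᵀ) := by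
    rw [key]; abel
  rw [h1, h2, det_neg, det_neg, abs_mul, abs_mul, abs_pow, abs_neg, abs_one, one_pow,
    one_mul, one_mul, abs_of_pos hA.det_pos, abs_of_pos (hA.add_posSemidef hD).det_pos]
  exact det_le_det_add hA hD
end

section
/- Let P be a symmetric positive definite n×n real matrix, R a symmetric positive definite m×m real matrix, H an m×n real matrix, and K* = P·Hᵀ·(H·P·Hᵀ + R)⁻¹ the Kalman gain. Fix a real number λ that is not an eigenvalue of P_{K*}. Then the Fréchet derivative of the real-valued map K ↦ det(λ·I - P_K) at the point K* is the zero linear map; i.e., K* is a critical point of K ↦ Φ(P_K, λ). -/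
open Matrix

attribute [local instance] Matrix.normedAddCommGroup Matrix.normedSpace

section Aux
variable {a b c : Type*} [Fintype a] [Fintype b] [Fintype c]

noncomputable def entryCLM (i : a) (j : b) : Matrix a b ℝ →L[ℝ] ℝ :=
  LinearMap.toContinuousLinearMap
    { toFun := fun M : Matrix a b ℝ => M i j
      map_add' := fun _ _ => rfl
      map_smul' := fun _ _ => rfl }

lemma differentiableAt_det' {k : ℕ} (A : Matrix (Fin k) (Fin k) ℝ) :
    DifferentiableAt ℝ (fun M : Matrix (Fin k) (Fin k) ℝ => M.det) A := by
  have h : (fun M : Matrix (Fin k) (Fin k) ℝ => M.det)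
      = fun M => ∑ σ : Equiv.Perm (Fin k),
          ((Equiv.Perm.sign σ : ℤ) : ℝ) * ∏ i, M (σ i) i := by
    funext M; rw [Matrix.det_apply']
  rw [h]
  apply DifferentiableAt.fun_sum
  intro σ _
  apply DifferentiableAt.const_mul
  exact (HasFDerivAt.finset_prod (fun i _ => (entryCLM (σ i) i).hasFDerivAt)).differentiableAt

lemma isBoundedBilinearMap_matrix_mul :
    IsBoundedBilinearMap ℝ (fun p : Matrix a b ℝ × Matrix b c ℝ => p.1 * p.2) where
  add_left := fun A A' B => Matrix.add_mul A A' B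
  smul_left := fun r A B => Matrix.smul_mul r A B
  add_right := fun A B B' => Matrix.mul_add A B B'
  smul_right := fun r A B => Matrix.mul_smul A r B
  bound := by
    refine ⟨Fintype.card b + 1, by positivity, fun A B => ?_⟩
    rw [Matrix.norm_le_iff (by positivity)]
    intro i j
    calc ‖(A * B) i j‖ = ‖∑ k, A i k * B k j‖ := by rw [Matrix.mul_apply]
      _ ≤ ∑ k, ‖A i k * B k j‖ := norm_sum_le _ _
      _ ≤ ∑ _k : b, ‖A‖ * ‖B‖ := by
          refine Finset.sum_le_sum fun k _ => ?_
          rw [norm_mul]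
          exact mul_le_mul (norm_entry_le_entrywise_sup_norm A)
            (norm_entry_le_entrywise_sup_norm B) (norm_nonneg _) (norm_nonneg _)
      _ = (Fintype.card b : ℝ) * (‖A‖ * ‖B‖) := by
          simp [Finset.sum_const, Finset.card_univ]
      _ ≤ (Fintype.card b + 1) * ‖A‖ * ‖B‖ := by
          rw [mul_assoc]
          nlinarith [Nat.cast_nonneg (α := ℝ) (Fintype.card b),
            mul_nonneg (norm_nonneg A) (norm_nonneg B)]
end Aux

theorem fderiv_det_charpoly_postCov_kalmanGain {n m : ℕ} (P : Matrix (Fin n) (Fin n) ℝ)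
    (R : Matrix (Fin m) (Fin m) ℝ) (H : Matrix (Fin m) (Fin n) ℝ)
    (hP : P.PosDef) (hR : R.PosDef)
    (hstar : (postCov P R H (kalmanGain P R H)).IsHermitian)
    (lam : ℝ) (hlam : ∀ i, lam ≠ hstar.eigenvalues i) :
    fderiv ℝ (fun K : Matrix (Fin n) (Fin m) ℝ =>
        (lam • (1 : Matrix (Fin n) (Fin n) ℝ) - postCov P R H K).det)
      (kalmanGain P R H) = 0 := by
  set K₀ := kalmanGain P R H with hK₀def
  set S := H * P * Hᵀ + R with hSdef
  have hPT : Pᵀ = P := by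
    rw [← conjTranspose_eq_transpose_of_trivial]; exact hP.isHermitian
  have hRT : Rᵀ = R := by
    rw [← conjTranspose_eq_transpose_of_trivial]; exact hR.isHermitian
  have hSpd : S.PosDef := by
    have h1 := hP.posSemidef.mul_mul_conjTranspose_same H
    rw [conjTranspose_eq_transpose_of_trivial] at h1
    exact Matrix.PosDef.posSemidef_add h1 hR
  have hdetS : IsUnit S.det := isUnit_iff_ne_zero.mpr hSpd.det_pos.ne'
  have hK0S : K₀ * S = P * Hᵀ := by
    rw [hK₀def, kalmanGain, ← hSdef, Matrix.mul_assoc, Matrix.nonsing_inv_mul _ hdetS,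
      Matrix.mul_one]
  have h1 : (1 - K₀ * H) * P * Hᵀ = P * Hᵀ - K₀ * (H * P * Hᵀ) := by
    simp only [Matrix.sub_mul, Matrix.mul_sub, Matrix.add_mul, Matrix.mul_add, Matrix.one_mul, Matrix.mul_one, Matrix.mul_assoc]
  have hA : (1 - K₀ * H) * P * Hᵀ = K₀ * R := by
    rw [h1, ← hK0S, ← Matrix.mul_sub, hSdef, add_sub_cancel_left]
  have hAT : H * P * (1 - K₀ * H)ᵀ = R * K₀ᵀ := by
    have h2 := congrArg Matrix.transpose hA
    simpa [Matrix.transpose_mul, hPT, hRT, Matrix.mul_assoc] using h2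
  have key : ∀ K : Matrix (Fin n) (Fin m) ℝ,
      postCov P R H K = postCov P R H K₀ + (K - K₀) * S * (K - K₀)ᵀ := by
    intro K
    obtain ⟨D, rfl⟩ : ∃ D, K = K₀ + D := ⟨K - K₀, by abel⟩
    rw [add_sub_cancel_left]
    have expand : postCov P R H (K₀ + D) = postCov P R H K₀ + D * S * Dᵀ
        + ((K₀ * R - (1 - K₀ * H) * P * Hᵀ) * Dᵀ + D * (R * K₀ᵀ - H * P * (1 - K₀ * H)ᵀ)) := by
      simp only [postCov, hSdef, Matrix.transpose_add, Matrix.transpose_sub, Matrix.transpose_mul,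
        Matrix.transpose_one, hPT, hRT, Matrix.sub_mul, Matrix.mul_sub, Matrix.add_mul, Matrix.mul_add, Matrix.one_mul, Matrix.mul_one,
        Matrix.mul_assoc]
      abel
    rw [expand, hA, hAT, sub_self, sub_self, Matrix.zero_mul, Matrix.mul_zero, add_zero, add_zero]
  have hfun : (fun K : Matrix (Fin n) (Fin m) ℝ =>
        lam • (1 : Matrix (Fin n) (Fin n) ℝ) - postCov P R H K)
      = fun K => (lam • (1 : Matrix (Fin n) (Fin n) ℝ) - postCov P R H K₀)
          - ((K - K₀) * S) * (K - K₀)ᵀ := by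
    funext K; rw [key K]; abel
  have hsub : HasFDerivAt (fun K : Matrix (Fin n) (Fin m) ℝ => K - K₀)
      (ContinuousLinearMap.id ℝ _) K₀ := (hasFDerivAt_id K₀).sub_const K₀
  set M1 : Matrix (Fin n) (Fin m) ℝ →L[ℝ] Matrix (Fin n) (Fin m) ℝ :=
    LinearMap.toContinuousLinearMap
      { toFun := fun X : Matrix (Fin n) (Fin m) ℝ => X * S
        map_add' := fun X Y => Matrix.add_mul X Y S
        map_smul' := fun r X => Matrix.smul_mul r X S } with hM1
  set M2 : Matrix (Fin n) (Fin m) ℝ →L[ℝ] Matrix (Fin m) (Fin n) ℝ :=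
    LinearMap.toContinuousLinearMap
      { toFun := fun X : Matrix (Fin n) (Fin m) ℝ => Xᵀ
        map_add' := fun X Y => Matrix.transpose_add X Y
        map_smul' := fun r X => Matrix.transpose_smul r X } with hM2
  have hf1 : HasFDerivAt (fun K : Matrix (Fin n) (Fin m) ℝ => (K - K₀) * S)
      (M1.comp (ContinuousLinearMap.id ℝ _)) K₀ := M1.hasFDerivAt.comp K₀ hsub
  have hf2 : HasFDerivAt (fun K : Matrix (Fin n) (Fin m) ℝ => (K - K₀)ᵀ)
      (M2.comp (ContinuousLinearMap.id ℝ _)) K₀ := M2.hasFDerivAt.comp K₀ hsub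
  have hB := isBoundedBilinearMap_matrix_mul (a := Fin n) (b := Fin m) (c := Fin n)
  have hq := (hB.hasFDerivAt ((K₀ - K₀) * S, (K₀ - K₀)ᵀ)).comp K₀ (HasFDerivAt.prodMk hf1 hf2)
  have hzero : hB.deriv ((K₀ - K₀) * S, (K₀ - K₀)ᵀ) = 0 := by
    apply ContinuousLinearMap.ext
    intro q
    rw [hB.deriv_apply]
    simp [sub_self]
  rw [hzero, ContinuousLinearMap.zero_comp] at hq
  have hg : HasFDerivAt (fun K : Matrix (Fin n) (Fin m) ℝ =>
      lam • (1 : Matrix (Fin n) (Fin n) ℝ) - postCov P R H K)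
      (0 : Matrix (Fin n) (Fin m) ℝ →L[ℝ] Matrix (Fin n) (Fin n) ℝ) K₀ := by
    rw [hfun]
    have h' := hq.const_sub (lam • (1 : Matrix (Fin n) (Fin n) ℝ) - postCov P R H K₀)
    rw [neg_zero] at h'
    exact h'
  have hdet := (differentiableAt_det'
    (lam • (1 : Matrix (Fin n) (Fin n) ℝ) - postCov P R H K₀)).hasFDerivAt
  have hcomp := hdet.comp K₀ hg
  exact hcomp.fderiv.trans (ContinuousLinearMap.ext fun x =>
    map_zero (fderiv ℝ (fun M : Matrix (Fin n) (Fin n) ℝ => M.det) (lam • 1 - postCov P R H K₀)))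
end

section
/- Let P be a symmetric positive definite n×n real matrix (with n ≥ 1), R a symmetric positive definite m×m real matrix, H an m×n real matrix, and K* = P·Hᵀ·(H·P·Hᵀ + R)⁻¹ the Kalman gain. Then K* minimizes the smallest eigenvalue of the posterior covariance: for every n×m real matrix K, the smallest eigenvalue of P_{K*} is less than or equal to the smallest eigenvalue of P_K. -/
open Matrix

/-- If `c` is below all eigenvalues of a hermitian matrix `A`, then `A - c • 1` is PSD. -/
lemma shift_posSemidef {n : ℕ} {A : Matrix (Fin n) (Fin n) ℝ} (hA : A.IsHermitian)
    {c : ℝ} (hc : ∀ i, c ≤ hA.eigenvalues i) : (A - c • 1).PosSemidef := by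
  classical
  set U : Matrix (Fin n) (Fin n) ℝ := (hA.eigenvectorUnitary : Matrix (Fin n) (Fin n) ℝ) with hU
  have hUU : U * star U = 1 := Matrix.mem_unitaryGroup_iff.mp hA.eigenvectorUnitary.2
  have hsmul : (c • (1 : Matrix (Fin n) (Fin n) ℝ)) = U * (c • (1 : Matrix (Fin n) (Fin n) ℝ)) * star U := by
    rw [Matrix.mul_smul, Matrix.mul_one, Matrix.smul_mul, hUU]
  have hdiag : diagonal (RCLike.ofReal ∘ hA.eigenvalues) - c • (1 : Matrix (Fin n) (Fin n) ℝ)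
      = diagonal (fun i => hA.eigenvalues i - c) := by
    ext i j
    by_cases h : i = j <;> simp [h, Matrix.one_apply, Matrix.diagonal]
  have key : A - c • 1 = U * (diagonal (fun i => hA.eigenvalues i - c)) * star U := by
    conv_lhs => rw [hA.spectral_theorem, Unitary.conjStarAlgAut_apply]
    rw [← hdiag, Matrix.mul_sub, Matrix.sub_mul, Matrix.mul_smul, Matrix.mul_one,
      Matrix.smul_mul, hUU, hU]
  rw [key]
  have hD : (diagonal (fun i => hA.eigenvalues i - c)).PosSemidef :=
    Matrix.posSemidef_diagonal_iff.mpr fun i => sub_nonneg.2 (hc i)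
  simpa [Matrix.star_eq_conjTranspose] using hD.mul_mul_conjTranspose_same U

/-- Loewner monotonicity of the minimal eigenvalue. -/
lemma iInf_eigenvalues_mono {n : ℕ} (hn : 1 ≤ n) {A B : Matrix (Fin n) (Fin n) ℝ}
    (hA : A.IsHermitian) (hB : B.IsHermitian) (hAB : (B - A).PosSemidef) :
    ⨅ i, hA.eigenvalues i ≤ ⨅ i, hB.eigenvalues i := by
  have : Nonempty (Fin n) := ⟨⟨0, hn⟩⟩
  set c := ⨅ i, hA.eigenvalues i with hc
  have h1 : ∀ i, c ≤ hA.eigenvalues i := fun i =>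
    ciInf_le (Set.Finite.bddBelow (Set.finite_range _)) i
  have h2 : (B - c • 1).PosSemidef := by
    have := hAB.add (shift_posSemidef hA h1)
    rwa [sub_add_sub_cancel] at this
  refine le_ciInf fun i => ?_
  set v : Fin n → ℝ := ⇑(hB.eigenvectorBasis i) with hv
  have hnz : v ≠ 0 := (WithLp.ofLp_eq_zero 2).ne.2 <| hB.eigenvectorBasis.orthonormal.ne_zero i
  have hpos : 0 < dotProduct v v := by
    have := (dotProduct_star_self_pos_iff (v := v)).mpr hnz
    simpa using this
  have h0 : 0 ≤ dotProduct (star v) ((B - c • 1) *ᵥ v) := h2.dotProduct_mulVec_nonneg v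
  have hBv : B *ᵥ v = hB.eigenvalues i • v := hB.mulVec_eigenvectorBasis i
  rw [Matrix.sub_mulVec, hBv, Matrix.smul_mulVec, Matrix.one_mulVec] at h0
  simp only [star_trivial, dotProduct_sub, dotProduct_smul, smul_eq_mul] at h0
  nlinarith [h0, hpos]

theorem smallest_eigenvalue_postCov_kalmanGain_le {n m : ℕ} (hn : 1 ≤ n)
    (P : Matrix (Fin n) (Fin n) ℝ)
    (R : Matrix (Fin m) (Fin m) ℝ) (H : Matrix (Fin m) (Fin n) ℝ)
    (hP : P.PosDef) (hR : R.PosDef)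
    (hstar : (postCov P R H (kalmanGain P R H)).IsHermitian)
    (K : Matrix (Fin n) (Fin m) ℝ) (hK : (postCov P R H K).IsHermitian) :
    ⨅ i, hstar.eigenvalues i ≤ ⨅ i, hK.eigenvalues i := by
  classical
  set G := kalmanGain P R H with hGdef
  set S := H * P * Hᵀ + R with hSdef
  have hPt : Pᵀ = P := by
    have h : Pᴴ = P := hP.1
    rwa [conjTranspose_eq_transpose_of_trivial] at h
  have hSpd : S.PosDef := by
    refine Matrix.PosDef.posSemidef_add ?_ hR
    have := hP.posSemidef.mul_mul_conjTranspose_same H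
    simpa [conjTranspose_eq_transpose_of_trivial] using this
  have hSt : Sᵀ = S := by
    have h : Sᴴ = S := hSpd.1
    rwa [conjTranspose_eq_transpose_of_trivial] at h
  have hdet : IsUnit S.det := hSpd.det_pos.ne'.isUnit
  have hSinv : S * S⁻¹ = 1 := Matrix.mul_nonsing_inv _ hdet
  have hSinv' : S⁻¹ * S = 1 := Matrix.nonsing_inv_mul _ hdet
  have hSinvT : S⁻¹ᵀ = S⁻¹ := by rw [Matrix.transpose_nonsing_inv, hSt]
  have hG : G = P * Hᵀ * S⁻¹ := rfl
  have hGt : Gᵀ = S⁻¹ * (H * P) := by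
    rw [hG, Matrix.transpose_mul, Matrix.transpose_mul, hSinvT, Matrix.transpose_transpose, hPt]
  have h1 : G * S = P * Hᵀ := by rw [hG, Matrix.mul_assoc, hSinv', Matrix.mul_one]
  have h2 : S * Gᵀ = H * P := by rw [hGt, ← Matrix.mul_assoc, hSinv, Matrix.one_mul]
  have h3 : P * Hᵀ * Gᵀ = G * (H * P) := by
    rw [hGt, hG, Matrix.mul_assoc (P * Hᵀ) S⁻¹ (H * P)]
  have expand : ∀ L : Matrix (Fin n) (Fin m) ℝ,
      postCov P R H L = (L - G) * S * (L - G)ᵀ + (P - G * (H * P)) := by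
    intro L
    have stepA : postCov P R H L
        = P - L * (H * P) - P * (Hᵀ * Lᵀ) + L * (S * Lᵀ) := by
      simp only [postCov, hSdef, Matrix.transpose_sub, Matrix.transpose_one, Matrix.transpose_mul,
        Matrix.sub_mul, Matrix.mul_sub, Matrix.one_mul, Matrix.mul_one, Matrix.add_mul,
        Matrix.mul_add, Matrix.mul_assoc]
      abel
    have stepB : (L - G) * S * (L - G)ᵀ
        = L * (S * Lᵀ) - L * (S * Gᵀ) - G * (S * Lᵀ) + G * (S * Gᵀ) := by
      simp only [Matrix.transpose_sub, Matrix.sub_mul, Matrix.mul_sub, Matrix.mul_assoc]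
      abel
    have h1' : ∀ X : Matrix (Fin m) (Fin n) ℝ, G * (S * X) = P * (Hᵀ * X) := fun X => by
      rw [← Matrix.mul_assoc, h1, Matrix.mul_assoc]
    have h3' : P * (Hᵀ * Gᵀ) = G * (H * P) := by rw [← Matrix.mul_assoc]; exact h3
    rw [stepA, stepB, h2, h1' Lᵀ]
    abel
  have hdiff : postCov P R H K - postCov P R H G = (K - G) * S * (K - G)ᵀ := by
    rw [expand K, expand G]
    simp
  have hpsd : (postCov P R H K - postCov P R H G).PosSemidef := by
    rw [hdiff]
    have := hSpd.posSemidef.mul_mul_conjTranspose_same (K - G)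
    simpa [conjTranspose_eq_transpose_of_trivial] using this
  exact iInf_eigenvalues_mono hn hstar hK hpsd
end

section
/- Let P be a symmetric positive definite n×n real matrix, R a symmetric positive definite m×m real matrix, H an m×n real matrix, and K* = P·Hᵀ·(H·P·Hᵀ + R)⁻¹ the Kalman gain. Then for every even index i and every n×m real matrix K, |a_i^{K*}| ≤ |a_i^K|, i.e. the absolute value of the coefficient of λ^i in the characteristic polynomial of P_K is minimized at K = K*. -/
open Matrix Finset Polynomial

section DetLemmas

variable {ι : Type*} [Fintype ι] [DecidableEq ι]

private lemma kalman_det_piecewise_one (N : Matrix ι ι ℝ) (s : Finset ι) :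
    det (fun i => s.piecewise (fun i => (1 : Matrix ι ι ℝ) i) N i) =
      det (N.submatrix (fun i : {i // ¬ i ∈ s} => (i : ι)) (fun i : {i // ¬ i ∈ s} => (i : ι))) := by
  classical
  set M : Matrix ι ι ℝ := fun i => s.piecewise (fun i => (1 : Matrix ι ι ℝ) i) N i with hM
  rw [← det_submatrix_equiv_self (Equiv.sumCompl (· ∈ s)) M]
  have h : M.submatrix (Equiv.sumCompl (· ∈ s)) (Equiv.sumCompl (· ∈ s)) = fromBlocks 1 0
      (N.submatrix (fun i : {i // ¬ i ∈ s} => (i : ι)) (fun i : {i // i ∈ s} => (i : ι)))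
      (N.submatrix (fun i : {i // ¬ i ∈ s} => (i : ι)) (fun i : {i // ¬ i ∈ s} => (i : ι))) := by
    ext (i | i) (j | j) <;> rw [submatrix_apply] <;>
      simp [hM, Finset.piecewise, Equiv.sumCompl_apply_inl, Equiv.sumCompl_apply_inr,
        fromBlocks, one_apply, i.2, j.2]
    · intro hij; exact j.2 (hij ▸ i.2)
  rw [h, det_fromBlocks_zero₁₂, det_one, one_mul]

private lemma kalman_det_smul_one_add (x : ℝ) (N : Matrix ι ι ℝ) :
    det (x • (1 : Matrix ι ι ℝ) + N) =
      ∑ s : Finset ι, x ^ s.card *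
        det (N.submatrix (fun i : {i // ¬ i ∈ s} => (i : ι)) (fun i : {i // ¬ i ∈ s} => (i : ι))) := by
  classical
  set f := (detRowAlternating : AlternatingMap ℝ (ι → ℝ) ℝ ι).toMultilinearMap with hf
  set a : ∀ _ : ι, ι → ℝ := fun i => x • (1 : Matrix ι ι ℝ) i with ha
  set b : ∀ _ : ι, ι → ℝ := fun i => N i with hb
  have h0 : det (x • (1 : Matrix ι ι ℝ) + N) = f (a + b) := by
    have : (x • (1 : Matrix ι ι ℝ) + N : Matrix ι ι ℝ) = (a + b : ∀ _ : ι, ι → ℝ) := by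
      funext i j
      simp [ha, hb, Matrix.add_apply, Matrix.smul_apply]
    rw [show det (x • (1 : Matrix ι ι ℝ) + N) = f (x • (1 : Matrix ι ι ℝ) + N) from rfl]
    exact congrArg f this
  rw [h0, MultilinearMap.map_add_univ]
  refine Finset.sum_congr rfl fun s _ => ?_
  have key : s.piecewise a b =
      s.piecewise (fun i => x • (s.piecewise (fun i => (1 : Matrix ι ι ℝ) i) b) i)
        (s.piecewise (fun i => (1 : Matrix ι ι ℝ) i) b) := by
    funext i
    by_cases h : i ∈ s <;> simp [ha, hb, Finset.piecewise, h]
  rw [key, MultilinearMap.map_piecewise_smul]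
  simp only [Finset.prod_const, smul_eq_mul]
  congr 1
  exact kalman_det_piecewise_one N s

private lemma kalman_charpoly_eq_sum (M : Matrix ι ι ℝ) :
    M.charpoly = ∑ s : Finset ι,
      Polynomial.C (det ((-M).submatrix (fun i : {i // ¬ i ∈ s} => (i : ι))
        (fun i : {i // ¬ i ∈ s} => (i : ι)))) * Polynomial.X ^ s.card := by
  apply Polynomial.funext
  intro x
  have h1 : Polynomial.eval x M.charpoly = det (x • (1 : Matrix ι ι ℝ) + (-M)) := by
    rw [Matrix.charpoly, show Polynomial.eval x (charmatrix M).det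
        = ((charmatrix M).map (Polynomial.evalRingHom x)).det from
      (RingHom.map_det (Polynomial.evalRingHom x) (charmatrix M)).symm ▸ rfl]
    congr 1
    ext i j
    by_cases h : i = j <;>
      simp [charmatrix_apply, h, Matrix.smul_apply, Matrix.add_apply, one_apply, diagonal_apply,
        sub_eq_add_neg]
  rw [h1, kalman_det_smul_one_add]
  rw [Polynomial.eval_finset_sum]
  refine Finset.sum_congr rfl fun s _ => ?_
  rw [Polynomial.eval_mul, Polynomial.eval_C, Polynomial.eval_pow, Polynomial.eval_X, mul_comm]

private lemma kalman_charpoly_coeff_eq (M : Matrix ι ι ℝ) (i : ℕ) :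
    M.charpoly.coeff i = ∑ s : Finset ι, if i = s.card then
      det ((-M).submatrix (fun i : {i // ¬ i ∈ s} => (i : ι))
        (fun i : {i // ¬ i ∈ s} => (i : ι))) else 0 := by
  rw [kalman_charpoly_eq_sum, Polynomial.finset_sum_coeff]
  refine Finset.sum_congr rfl fun s _ => ?_
  rw [Polynomial.coeff_C_mul, Polynomial.coeff_X_pow]
  split <;> simp

private lemma kalman_one_le_det_one_add {Q : Matrix ι ι ℝ} (hQ : Q.PosSemidef) :
    1 ≤ det (1 + Q) := by
  have hH := hQ.isHermitian
  have hspec := hH.spectral_theorem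
  set U : Matrix ι ι ℝ := (Matrix.IsHermitian.eigenvectorUnitary hH : Matrix ι ι ℝ) with hU
  have hUU : U * star U = 1 :=
    (Matrix.mem_unitaryGroup_iff).mp (Matrix.IsHermitian.eigenvectorUnitary hH).2
  have h1 : (1 : Matrix ι ι ℝ) + Q
      = U * (1 + diagonal (RCLike.ofReal ∘ hH.eigenvalues)) * star U := by
    rw [Matrix.mul_add, Matrix.add_mul, Matrix.mul_one, hUU]
    exact congrArg (1 + ·) hspec
  rw [h1, det_mul, det_mul]
  have h3 : det U * det (1 + diagonal (RCLike.ofReal ∘ hH.eigenvalues)) * det (star U)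
      = det (1 + diagonal (RCLike.ofReal ∘ hH.eigenvalues)) * (det U * det (star U)) := by ring
  rw [h3, ← det_mul, hUU, det_one, mul_one]
  have h2 : (1 : Matrix ι ι ℝ) + diagonal (RCLike.ofReal ∘ hH.eigenvalues)
      = diagonal (fun i => 1 + hH.eigenvalues i) := by
    rw [← diagonal_one, diagonal_add]
    rfl
  rw [h2, det_diagonal]
  have : ∀ i ∈ Finset.univ, (1 : ℝ) ≤ 1 + hH.eigenvalues i :=
    fun i _ => by linarith [hQ.eigenvalues_nonneg i]
  calc (1 : ℝ) = ∏ _i : ι, 1 := by simp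
    _ ≤ ∏ i : ι, (1 + hH.eigenvalues i) :=
        Finset.prod_le_prod (fun i _ => by norm_num) this

private lemma kalman_det_le_det_of_le {A B : Matrix ι ι ℝ} (hA : A.PosDef)
    (hBA : (B - A).PosSemidef) : det A ≤ det B := by
  obtain ⟨S, hS, hSS⟩ : ∃ S : Matrix ι ι ℝ, S.PosSemidef ∧ S * S = A :=
    by open scoped MatrixOrder in exact ⟨CFC.sqrt A, (CFC.sqrt_nonneg A).posSemidef,
      CFC.sqrt_mul_sqrt_self A hA.posSemidef.nonneg⟩
  have hdetS : det S ≠ 0 := by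
    intro h
    have : det A = 0 := by rw [← hSS, det_mul, h, zero_mul]
    exact hA.det_pos.ne' this
  have hSunit : IsUnit S.det := isUnit_iff_ne_zero.mpr hdetS
  have hSi : S * S⁻¹ = 1 := mul_nonsing_inv S hSunit
  have hSi' : S⁻¹ * S = 1 := nonsing_inv_mul S hSunit
  have hSiH : (S⁻¹)ᴴ = S⁻¹ := by rw [conjTranspose_nonsing_inv, hS.isHermitian.eq]
  have hQ : ((S⁻¹)ᴴ * (B - A) * S⁻¹).PosSemidef := hBA.conjTranspose_mul_mul_same _
  rw [hSiH] at hQ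
  have hB : B = S * (1 + S⁻¹ * (B - A) * S⁻¹) * S := by
    rw [Matrix.mul_add, Matrix.add_mul, Matrix.mul_one]
    rw [show S * (S⁻¹ * (B - A) * S⁻¹) * S = (S * S⁻¹) * (B - A) * (S⁻¹ * S) by
      simp only [Matrix.mul_assoc], hSi, hSi', Matrix.one_mul, Matrix.mul_one, hSS]
    abel
  have hdetB : det B = det A * det (1 + S⁻¹ * (B - A) * S⁻¹) := by
    conv_lhs => rw [hB]
    rw [det_mul, det_mul]
    have h := det_mul S S
    rw [hSS] at h
    rw [h]; ring
  calc det A = det A * 1 := (mul_one _).symm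
    _ ≤ det A * det (1 + S⁻¹ * (B - A) * S⁻¹) :=
        mul_le_mul_of_nonneg_left (kalman_one_le_det_one_add hQ) hA.det_pos.le
    _ = det B := hdetB.symm

private lemma kalman_posDef_submatrix {M : Matrix ι ι ℝ} (hM : M.PosDef) {κ : Type*} [Fintype κ]
    [DecidableEq κ] (e : κ → ι) (he : Function.Injective e) : (M.submatrix e e).PosDef := by
  refine PosDef.of_dotProduct_mulVec_pos (hM.isHermitian.submatrix e) fun x hx => ?_
  set y : ι → ℝ := fun i => ∑ j, if i = e j then x j else 0 with hy
  have hye : ∀ j, y (e j) = x j := by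
    intro j
    rw [hy]
    simp only
    rw [Finset.sum_eq_single j (fun b _ hb => by
      rw [if_neg (fun h => hb (he h.symm))]) (by simp)]
    simp
  have hMy : ∀ j, (M *ᵥ y) (e j) = (M.submatrix e e *ᵥ x) j := by
    intro j
    simp only [mulVec, dotProduct, submatrix_apply, hy]
    simp only [Finset.mul_sum, mul_ite, mul_zero]
    rw [Finset.sum_comm]
    simp
  have hdot : dotProduct (star x) (M.submatrix e e *ᵥ x) = dotProduct (star y) (M *ᵥ y) := by
    set g := M *ᵥ y with hg
    have hgy : ∀ i, (star y) i * g i = (∑ j, if i = e j then x j else 0) * g i := by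
      intro i; rw [star_trivial, hy]
    rw [show star y ⬝ᵥ g = ∑ i, (∑ j, if i = e j then x j else 0) * g i from
      Finset.sum_congr rfl fun i _ => hgy i]
    simp only [star_trivial, dotProduct, Finset.sum_mul, ite_mul, zero_mul]
    rw [Finset.sum_comm]
    refine (Finset.sum_congr rfl fun j _ => ?_).symm
    rw [Finset.sum_eq_single (e j) (fun b _ hb => by rw [if_neg hb]) (by simp)]
    rw [if_pos rfl, hMy]
  have hy0 : y ≠ 0 := by
    obtain ⟨j, hj⟩ := Function.ne_iff.mp hx
    intro h
    apply hj
    have := congrFun h (e j)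
    rw [hye j] at this
    simpa using this
  rw [hdot]
  exact hM.dotProduct_mulVec_pos hy0

/-- For a positive definite matrix, the absolute value of the charpoly coefficient is the sum
of the complementary principal minors. -/
private lemma kalman_abs_charpoly_coeff {M : Matrix ι ι ℝ} (hM : M.PosDef) (i : ℕ) :
    |M.charpoly.coeff i| = ∑ s : Finset ι, if i = s.card then
      det (M.submatrix (fun i : {i // ¬ i ∈ s} => (i : ι))
        (fun i : {i // ¬ i ∈ s} => (i : ι))) else 0 := by
  classical
  have key : M.charpoly.coeff i = (-1 : ℝ) ^ (Fintype.card ι - i) *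
      ∑ s : Finset ι, if i = s.card then
        det (M.submatrix (fun i : {i // ¬ i ∈ s} => (i : ι))
          (fun i : {i // ¬ i ∈ s} => (i : ι))) else 0 := by
    rw [kalman_charpoly_coeff_eq, Finset.mul_sum]
    refine Finset.sum_congr rfl fun s _ => ?_
    by_cases h : i = s.card
    · rw [if_pos h, if_pos h]
      have hsub : ((-M).submatrix (fun i : {i // ¬ i ∈ s} => (i : ι))
          (fun i : {i // ¬ i ∈ s} => (i : ι)))
          = -(M.submatrix (fun i : {i // ¬ i ∈ s} => (i : ι))
            (fun i : {i // ¬ i ∈ s} => (i : ι))) := rfl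
      rw [hsub, det_neg]
      have hcard : Fintype.card {i // ¬ i ∈ s} = Fintype.card ι - i := by
        rw [Fintype.card_subtype_compl, h]
        congr 1
        exact Fintype.card_coe s
      rw [hcard]
    · rw [if_neg h, if_neg h, mul_zero]
  rw [key, abs_mul, abs_pow, abs_neg, abs_one, one_pow, one_mul]
  refine abs_of_nonneg (Finset.sum_nonneg fun s _ => ?_)
  split
  · exact (kalman_posDef_submatrix hM _ Subtype.val_injective).det_pos.le
  · exact le_refl 0
    
end DetLemmas

section Kalman

variable {n m : ℕ} (P : Matrix (Fin n) (Fin n) ℝ) (R : Matrix (Fin m) (Fin m) ℝ)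
  (H : Matrix (Fin m) (Fin n) ℝ)

private lemma kalman_postCov_posDef (hP : P.PosDef) (hR : R.PosDef)
    (K : Matrix (Fin n) (Fin m) ℝ) : (postCov P R H K).PosDef := by
  have hherm : (postCov P R H K).IsHermitian := by
    have h1 : ((1 - K * H) * P * (1 - K * H)ᵀ).PosSemidef := by
      have := hP.posSemidef.mul_mul_conjTranspose_same (1 - K * H)
      simpa using this
    have h2 : (K * R * Kᵀ).PosSemidef := by
      have := hR.posSemidef.mul_mul_conjTranspose_same K
      simpa using this
    exact (h1.add h2).isHermitian
  refine PosDef.of_dotProduct_mulVec_pos hherm fun x hx => ?_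
  set u : Fin n → ℝ := (1 - K * H)ᵀ *ᵥ x with hu
  set v : Fin m → ℝ := Kᵀ *ᵥ x with hv
  have hq1 : dotProduct (star x) (((1 - K * H) * P * (1 - K * H)ᵀ) *ᵥ x)
      = dotProduct (star u) (P *ᵥ u) := by
    rw [hu, ← mulVec_mulVec, ← mulVec_mulVec, dotProduct_mulVec, star_trivial, star_trivial,
      ← mulVec_transpose]
  have hq2 : dotProduct (star x) ((K * R * Kᵀ) *ᵥ x) = dotProduct (star v) (R *ᵥ v) := by
    rw [hv, ← mulVec_mulVec, ← mulVec_mulVec, dotProduct_mulVec, star_trivial, star_trivial,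
      ← mulVec_transpose]
  rw [postCov, add_mulVec, dotProduct_add, hq1, hq2]
  by_cases hvz : v = 0
  · have hux : u = x := by
      rw [hu, transpose_sub, transpose_one, sub_mulVec, transpose_mul, one_mulVec,
        ← mulVec_mulVec, ← hv, hvz]
      simp
    have h1 : 0 < dotProduct (star u) (P *ᵥ u) := hP.dotProduct_mulVec_pos (hux ▸ hx)
    have h2 : dotProduct (star v) (R *ᵥ v) = 0 := by rw [hvz]; simp
    linarith
  · have h1 : 0 ≤ dotProduct (star u) (P *ᵥ u) := hP.posSemidef.dotProduct_mulVec_nonneg u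
    have h2 : 0 < dotProduct (star v) (R *ᵥ v) := hR.dotProduct_mulVec_pos hvz
    linarith

private lemma kalman_postCov_diff (hP : P.PosDef) (hR : R.PosDef)
    (K : Matrix (Fin n) (Fin m) ℝ) :
    postCov P R H K = postCov P R H (kalmanGain P R H) +
      (K - kalmanGain P R H) * (H * P * Hᵀ + R) * (K - kalmanGain P R H)ᵀ := by
  have hPt : Pᵀ = P := hP.isHermitian.eq
  have hRt : Rᵀ = R := hR.isHermitian.eq
  set S : Matrix (Fin m) (Fin m) ℝ := H * P * Hᵀ + R with hS
  have hSt : Sᵀ = S := by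
    rw [hS, transpose_add, transpose_mul, transpose_mul, transpose_transpose, hPt, hRt,
      Matrix.mul_assoc]
  have hSpd : S.PosDef := by
    apply Matrix.PosDef.posSemidef_add _ hR
    have := hP.posSemidef.mul_mul_conjTranspose_same H
    simpa using this
  set K₀ : Matrix (Fin n) (Fin m) ℝ := kalmanGain P R H with hK₀
  have hKS : K₀ * S = P * Hᵀ := by
    rw [hK₀, kalmanGain, ← hS, Matrix.mul_assoc, nonsing_inv_mul S
      (isUnit_iff_ne_zero.mpr hSpd.det_pos.ne'), Matrix.mul_one]
  have hSK : S * K₀ᵀ = H * P := by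
    have := congrArg transpose hKS
    rw [transpose_mul, hSt, transpose_mul, transpose_transpose, hPt] at this
    rw [this]
  have expand : ∀ L : Matrix (Fin n) (Fin m) ℝ,
      postCov P R H L = P - L * (H * P) - (P * Hᵀ) * Lᵀ + L * S * Lᵀ := by
    intro L
    rw [postCov, hS, transpose_sub, transpose_one, transpose_mul]
    simp only [Matrix.mul_add, Matrix.add_mul, Matrix.mul_sub, Matrix.sub_mul,
      Matrix.mul_assoc, Matrix.one_mul, Matrix.mul_one]
    abel
  have hPHK : P * Hᵀ * K₀ᵀ = K₀ * (H * P) := by rw [← hKS, Matrix.mul_assoc, hSK]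
  have rhs : (K - K₀) * S * (K - K₀)ᵀ
      = K * S * Kᵀ - K * (H * P) - (P * Hᵀ) * Kᵀ + K₀ * (H * P) := by
    simp only [transpose_sub, Matrix.mul_sub, Matrix.sub_mul]
    rw [hKS, Matrix.mul_assoc K S K₀ᵀ, hSK, hPHK]
    abel
  rw [expand K, expand K₀, rhs]
  have hK0 : K₀ * S * K₀ᵀ = K₀ * (H * P) := by rw [Matrix.mul_assoc, hSK]
  rw [hK0, hPHK]
  abel

private lemma kalman_postCov_sub_posSemidef (hP : P.PosDef) (hR : R.PosDef)
    (K : Matrix (Fin n) (Fin m) ℝ) :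
    (postCov P R H K - postCov P R H (kalmanGain P R H)).PosSemidef := by
  rw [kalman_postCov_diff P R H hP hR K, add_sub_cancel_left]
  have hSpd : (H * P * Hᵀ + R).PosDef := by
    apply Matrix.PosDef.posSemidef_add _ hR
    have := hP.posSemidef.mul_mul_conjTranspose_same H
    simpa using this
  have := hSpd.posSemidef.mul_mul_conjTranspose_same (K - kalmanGain P R H)
  simpa using this

end Kalman

theorem abs_charpoly_coeff_postCov_kalmanGain_le {n m : ℕ} (P : Matrix (Fin n) (Fin n) ℝ)
    (R : Matrix (Fin m) (Fin m) ℝ) (H : Matrix (Fin m) (Fin n) ℝ)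
    (hP : P.PosDef) (hR : R.PosDef) (i : ℕ) (hi : Even i)
    (K : Matrix (Fin n) (Fin m) ℝ) :
    |(postCov P R H (kalmanGain P R H)).charpoly.coeff i| ≤
      |(postCov P R H K).charpoly.coeff i| := by
  classical
  have hA : (postCov P R H (kalmanGain P R H)).PosDef := kalman_postCov_posDef P R H hP hR _
  have hB : (postCov P R H K).PosDef := kalman_postCov_posDef P R H hP hR K
  have hdiff := kalman_postCov_sub_posSemidef P R H hP hR K
  rw [kalman_abs_charpoly_coeff hA i, kalman_abs_charpoly_coeff hB i]
  refine Finset.sum_le_sum fun s _ => ?_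
  split
  · refine kalman_det_le_det_of_le
      (kalman_posDef_submatrix hA _ Subtype.val_injective) ?_
    have heq : (postCov P R H K).submatrix (fun i : {i // ¬ i ∈ s} => (i : Fin n))
          (fun i : {i // ¬ i ∈ s} => (i : Fin n)) -
        (postCov P R H (kalmanGain P R H)).submatrix (fun i : {i // ¬ i ∈ s} => (i : Fin n))
          (fun i : {i // ¬ i ∈ s} => (i : Fin n))
        = (postCov P R H K - postCov P R H (kalmanGain P R H)).submatrix
            (fun i : {i // ¬ i ∈ s} => (i : Fin n)) (fun i : {i // ¬ i ∈ s} => (i : Fin n)) := rfl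
    rw [heq]
    exact hdiff.submatrix _
  · exact le_rfl
end

section
/- Let P be a symmetric positive definite n×n real matrix, R a symmetric positive definite m×m real matrix, H an m×n real matrix, and K* = P·Hᵀ·(H·P·Hᵀ + R)⁻¹ the Kalman gain. Let Q be a symmetric multivariate polynomial in n variables over ℝ (i.e. Q is invariant under every permutation of its variables). Then the Fréchet derivative of the real-valued map K ↦ Q(λ_1^K, …, λ_n^K), where λ_1^K, …, λ_n^K are the eigenvalues (with multiplicity) of the symmetric positive definite matrix P_K, at the point K* is the zero linear map; i.e., K* is a critical point of K ↦ Q evaluated at the eigenvalues of P_K. -/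
open Matrix

attribute [local instance] Matrix.normedAddCommGroup Matrix.normedSpace

open Polynomial

section helpers

/-- `postCov` is a quadratic expansion around the Kalman gain. -/
theorem postCov_eq_aux {n m : ℕ} (P : Matrix (Fin n) (Fin n) ℝ)
    (R : Matrix (Fin m) (Fin m) ℝ) (H : Matrix (Fin m) (Fin n) ℝ)
    (hP : P.PosDef) (hR : R.PosDef) (K : Matrix (Fin n) (Fin m) ℝ) :
    postCov P R H K = postCov P R H (kalmanGain P R H) +
      (K - kalmanGain P R H) * (H * P * Hᵀ + R) * (K - kalmanGain P R H)ᵀ := by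
  set S : Matrix (Fin m) (Fin m) ℝ := H * P * Hᵀ + R with hS
  have hPt : Pᵀ = P := by
    have := hP.isHermitian.eq
    rwa [conjTranspose_eq_transpose_of_trivial] at this
  have hRt : Rᵀ = R := by
    have := hR.isHermitian.eq
    rwa [conjTranspose_eq_transpose_of_trivial] at this
  have hSpd : S.PosDef := by
    have h1 : (H * P * Hᵀ).PosSemidef := by
      have := hP.posSemidef.mul_mul_conjTranspose_same H
      rwa [conjTranspose_eq_transpose_of_trivial] at this
    exact Matrix.PosDef.posSemidef_add h1 hR
  have hSt : Sᵀ = S := by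
    rw [hS, transpose_add, transpose_mul, transpose_mul, transpose_transpose, hPt, hRt,
      Matrix.mul_assoc]
  have hSinv : S⁻¹ * S = 1 := Matrix.nonsing_inv_mul S hSpd.det_pos.ne'.isUnit
  have hSinv' : S * S⁻¹ = 1 := Matrix.mul_nonsing_inv S hSpd.det_pos.ne'.isUnit
  have hKt : (kalmanGain P R H)ᵀ = S⁻¹ * (H * P) := by
    rw [kalmanGain, ← hS, transpose_mul, transpose_mul, transpose_transpose, hPt,
      Matrix.transpose_nonsing_inv, hSt]
    try rfl
  have hKS : kalmanGain P R H * S = P * Hᵀ := by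
    rw [kalmanGain, ← hS, Matrix.mul_assoc, hSinv, Matrix.mul_one]
  have hSK : S * (kalmanGain P R H)ᵀ = H * P := by
    rw [hKt, ← Matrix.mul_assoc, hSinv', Matrix.one_mul]
  set K₀ := kalmanGain P R H
  have expand : ∀ L : Matrix (Fin n) (Fin m) ℝ,
      postCov P R H L = P - L * (H * P) - P * Hᵀ * Lᵀ + L * S * Lᵀ := by
    intro L
    rw [postCov, hS]
    simp only [transpose_sub, transpose_mul, transpose_one, hPt]
    simp only [Matrix.mul_add, Matrix.add_mul, Matrix.mul_assoc, Matrix.mul_one,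
      Matrix.one_mul, Matrix.sub_mul, Matrix.mul_sub]
    abel
  have e1 : (K - K₀) * S * (K - K₀)ᵀ
      = K * S * Kᵀ - K * (H * P) - P * Hᵀ * Kᵀ + K₀ * (H * P) := by
    rw [transpose_sub]
    simp only [Matrix.sub_mul, Matrix.mul_sub]
    rw [Matrix.mul_assoc K S K₀ᵀ, hSK, Matrix.mul_assoc K₀ S K₀ᵀ, hSK, hKS]
    abel
  have f2 : K₀ * S * K₀ᵀ = K₀ * (H * P) := by rw [Matrix.mul_assoc, hSK]
  have f1 : P * Hᵀ * K₀ᵀ = K₀ * (H * P) := by rw [← hKS, Matrix.mul_assoc, hSK]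
  rw [expand, expand, e1, f1, f2]
  abel

/-- The bilinear map `(X, Y) ↦ X * S * Yᵀ`. -/
noncomputable def bLinAux {n m : ℕ} (S : Matrix (Fin m) (Fin m) ℝ) :
    Matrix (Fin n) (Fin m) ℝ →ₗ[ℝ] Matrix (Fin n) (Fin m) ℝ →ₗ[ℝ] Matrix (Fin n) (Fin n) ℝ :=
  LinearMap.mk₂ ℝ (fun X Y => X * S * Yᵀ)
    (fun X X' Y => by beta_reduce; rw [Matrix.add_mul, Matrix.add_mul])
    (fun c X Y => by beta_reduce; rw [Matrix.smul_mul, Matrix.smul_mul])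
    (fun X Y Y' => by beta_reduce; rw [transpose_add, Matrix.mul_add])
    (fun c X Y => by beta_reduce; rw [transpose_smul, Matrix.mul_smul])

theorem hasFDerivAt_quad_aux {n m : ℕ} (S : Matrix (Fin m) (Fin m) ℝ)
    (K₀ : Matrix (Fin n) (Fin m) ℝ) :
    HasFDerivAt (fun K : Matrix (Fin n) (Fin m) ℝ => (K - K₀) * S * (K - K₀)ᵀ)
      (0 : Matrix (Fin n) (Fin m) ℝ →L[ℝ] Matrix (Fin n) (Fin n) ℝ) K₀ := by
  classical
  let b2 : Matrix (Fin n) (Fin m) ℝ →ₗ[ℝ]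
      (Matrix (Fin n) (Fin m) ℝ →L[ℝ] Matrix (Fin n) (Fin n) ℝ) :=
    { toFun := fun X => LinearMap.toContinuousLinearMap (bLinAux S X)
      map_add' := fun X Y => by ext Z; simp [bLinAux]
      map_smul' := fun c X => by ext Z; simp [bLinAux] }
  let bc : Matrix (Fin n) (Fin m) ℝ →L[ℝ]
      (Matrix (Fin n) (Fin m) ℝ →L[ℝ] Matrix (Fin n) (Fin n) ℝ) :=
    LinearMap.toContinuousLinearMap b2
  have hb : IsBoundedBilinearMap ℝ
      (fun p : Matrix (Fin n) (Fin m) ℝ × Matrix (Fin n) (Fin m) ℝ => bc p.1 p.2) :=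
    bc.isBoundedBilinearMap
  have hφ : HasFDerivAt (fun K : Matrix (Fin n) (Fin m) ℝ => (K - K₀, K - K₀))
      ((ContinuousLinearMap.id ℝ _).prod (ContinuousLinearMap.id ℝ _)) K₀ :=
    ((hasFDerivAt_id K₀).sub_const K₀).prodMk ((hasFDerivAt_id K₀).sub_const K₀)
  have hcomp := (hb.hasFDerivAt (K₀ - K₀, K₀ - K₀)).comp K₀ hφ
  have hzero : (hb.deriv (K₀ - K₀, K₀ - K₀)).comp
      ((ContinuousLinearMap.id ℝ _).prod (ContinuousLinearMap.id ℝ _)) = 0 := by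
    ext q
    simp [IsBoundedBilinearMap.deriv_apply, sub_self]
  have hcomp := hcomp.congr_fderiv hzero
  exact hcomp

theorem diff_entry_aux {n m : ℕ} (i : Fin n) (j : Fin m) :
    Differentiable ℝ (fun A : Matrix (Fin n) (Fin m) ℝ => A i j) := by
  have h1 : Differentiable ℝ (fun A : Matrix (Fin n) (Fin m) ℝ => A i) :=
    (differentiable_pi.mp differentiable_id) i
  exact (differentiable_pi.mp h1) j

theorem diff_finset_prod_aux {E ι : Type*} [NormedAddCommGroup E] [NormedSpace ℝ E]
    (s : Finset ι) (f : ι → E → ℝ) (h : ∀ i, Differentiable ℝ (f i)) :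
    Differentiable ℝ (fun x => ∏ i ∈ s, f i x) := by
  classical
  induction s using Finset.induction with
  | empty => simpa using differentiable_const (1:ℝ)
  | insert _ _ hx ih =>
    simp only [Finset.prod_insert hx]
    exact (h _).mul ih

theorem diff_det_affine_aux {N : ℕ} (c : ℝ) :
    Differentiable ℝ
      (fun A : Matrix (Fin N) (Fin N) ℝ => (c • (1 : Matrix (Fin N) (Fin N) ℝ) - A).det) := by
  classical
  simp only [Matrix.det_apply']
  apply Differentiable.fun_sum
  intro σ _
  apply Differentiable.const_mul
  apply diff_finset_prod_aux
  intro i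
  simp only [Matrix.sub_apply, Matrix.smul_apply, smul_eq_mul]
  exact (differentiable_const _).sub (diff_entry_aux _ _)

theorem diff_mv_eval_aux {E : Type*} [NormedAddCommGroup E] [NormedSpace ℝ E] {n : ℕ}
    (q : MvPolynomial (Fin n) ℝ) (c : E → Fin n → ℝ)
    (hc : ∀ i, Differentiable ℝ (fun x => c x i)) :
    Differentiable ℝ (fun x => MvPolynomial.eval (c x) q) := by
  induction q using MvPolynomial.induction_on with
  | C a => simpa using differentiable_const a
  | add p q hp hq => simp only [map_add]; exact hp.add hq
  | mul_X p i hp => simp only [_root_.map_mul, MvPolynomial.eval_X]; exact hp.mul (hc i)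

theorem eval_aeval_aux {n : ℕ} (f : Fin n → ℝ) (es : Fin n → MvPolynomial (Fin n) ℝ)
    (q : MvPolynomial (Fin n) ℝ) :
    MvPolynomial.eval f (MvPolynomial.aeval es q)
      = MvPolynomial.eval (fun i => MvPolynomial.eval f (es i)) q := by
  induction q using MvPolynomial.induction_on with
  | C a => simp
  | add p q hp hq => simp only [map_add, hp, hq]
  | mul_X p i hp => simp only [_root_.map_mul, hp, MvPolynomial.aeval_X, MvPolynomial.eval_X]

theorem det_affine_eq_prod_aux {N : ℕ} {A : Matrix (Fin N) (Fin N) ℝ} (hA : A.IsHermitian)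
    (x : ℝ) :
    (x • (1 : Matrix (Fin N) (Fin N) ℝ) - A).det = ∏ i, (x - hA.eigenvalues i) := by
  classical
  set U : Matrix (Fin N) (Fin N) ℝ := (hA.eigenvectorUnitary : Matrix (Fin N) (Fin N) ℝ)
  have hU1 : star U * U = 1 := Unitary.coe_star_mul_self hA.eigenvectorUnitary
  have hdiag : star U * A * U = diagonal hA.eigenvalues := by
    have := hA.conjStarAlgAut_star_eigenvectorUnitary
    simpa using this
  have key : star U * (x • (1 : Matrix (Fin N) (Fin N) ℝ) - A) * U
      = diagonal (fun i => x - hA.eigenvalues i) := by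
    rw [Matrix.mul_sub, Matrix.sub_mul, hdiag, Matrix.mul_smul, Matrix.mul_one,
      Matrix.smul_mul, hU1, smul_one_eq_diagonal, diagonal_sub]
  have hdetU : (star U).det * U.det = 1 := by
    rw [← det_mul, hU1, det_one]
  have := congrArg Matrix.det key
  rw [det_mul, det_mul, det_diagonal] at this
  calc (x • (1 : Matrix (Fin N) (Fin N) ℝ) - A).det
      = ((star U).det * U.det) * (x • (1 : Matrix (Fin N) (Fin N) ℝ) - A).det := by
        rw [hdetU, one_mul]
    _ = (star U).det * (x • (1 : Matrix (Fin N) (Fin N) ℝ) - A).det * U.det := by ring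
    _ = ∏ i, (x - hA.eigenvalues i) := this

/-- Lagrange interpolation weights for extracting polynomial coefficients from values. -/
noncomputable def lagW (N : ℕ) (j : ℕ) (i : Fin (N + 1)) : ℝ :=
  (Lagrange.basis Finset.univ (fun i : Fin (N + 1) => (i : ℝ)) i).coeff j

theorem coeff_eq_lagW {N : ℕ} (p : ℝ[X]) (hdeg : p.degree < N + 1) (j : ℕ) :
    p.coeff j = ∑ i : Fin (N + 1), p.eval (i : ℝ) * lagW N j i := by
  classical
  have hinj : Set.InjOn (fun i : Fin (N + 1) => (i : ℝ))
      (Finset.univ : Finset (Fin (N + 1))) := by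
    intro a _ b _ h
    exact Fin.ext (Nat.cast_injective h)
  have hdeg' : p.degree < (Finset.univ : Finset (Fin (N + 1))).card := by
    simpa using hdeg
  have hp := (Lagrange.eq_interpolate hinj hdeg').symm
  conv_lhs => rw [← hp]
  rw [Lagrange.interpolate_apply, Polynomial.finset_sum_coeff]
  refine Finset.sum_congr rfl fun i _ => ?_
  rw [Polynomial.coeff_C_mul, lagW, mul_comm]

theorem eval_prodXsub {N : ℕ} (lam : Fin N → ℝ) (x : ℝ) :
    (∏ i, (X + C (-(lam i))) : ℝ[X]).eval x = ∏ i, (x - lam i) := by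
  rw [Polynomial.eval_prod]
  refine Finset.prod_congr rfl fun i _ => ?_
  simp [sub_eq_add_neg]

theorem degree_prodXsub {N : ℕ} (lam : Fin N → ℝ) :
    (∏ i, (X + C (-(lam i))) : ℝ[X]).degree < N + 1 := by
  have hm : (∏ i, (X + C (-(lam i))) : ℝ[X]).Monic :=
    monic_prod_of_monic _ _ fun i _ => monic_X_add_C _
  have hnd : (∏ i, (X + C (-(lam i))) : ℝ[X]).natDegree = N := by
    rw [Polynomial.natDegree_prod _ _ fun i _ => (monic_X_add_C _).ne_zero]
    simp only [Polynomial.natDegree_X_add_C, Finset.sum_const, Finset.card_univ,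
      Fintype.card_fin, smul_eq_mul, mul_one]
  rw [Polynomial.degree_eq_natDegree hm.ne_zero, hnd]
  exact_mod_cast Nat.lt_succ_self N

theorem coeff_prodXsub {N : ℕ} (lam : Fin N → ℝ) {k : ℕ} (hk : k ≤ N) :
    (∏ i, (X + C (-(lam i))) : ℝ[X]).coeff (N - k)
      = (-1) ^ k * MvPolynomial.eval lam (MvPolynomial.esymm (Fin N) ℝ k) := by
  classical
  have h1 := Finset.prod_X_add_C_coeff (Finset.univ : Finset (Fin N)) (fun i => -(lam i))
    (k := N - k) (by simpa using Nat.sub_le N k)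
  have hcard : (Finset.univ : Finset (Fin N)).card = N := by simp
  rw [hcard] at h1
  have h2 : N - (N - k) = k := Nat.sub_sub_self hk
  rw [h2] at h1
  have h4 : MvPolynomial.eval lam (MvPolynomial.esymm (Fin N) ℝ k)
      = ∑ t ∈ Finset.powersetCard k Finset.univ, ∏ i ∈ t, lam i := by
    simp [MvPolynomial.esymm, MvPolynomial.eval_prod]
  rw [h1, h4, Finset.mul_sum]
  refine Finset.sum_congr rfl fun t ht => ?_
  have hct : t.card = k := (Finset.mem_powersetCard.mp ht).2
  calc (∏ i ∈ t, -lam i) = ∏ i ∈ t, ((-1) * lam i) := by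
        refine Finset.prod_congr rfl fun i _ => by ring
    _ = (-1) ^ k * ∏ i ∈ t, lam i := by
        rw [Finset.prod_mul_distrib, Finset.prod_const, hct]

end helpers

theorem fderiv_symmPoly_eigenvalues_postCov_kalmanGain {n m : ℕ}
    (P : Matrix (Fin n) (Fin n) ℝ)
    (R : Matrix (Fin m) (Fin m) ℝ) (H : Matrix (Fin m) (Fin n) ℝ)
    (hP : P.PosDef) (hR : R.PosDef)
    (hPK : ∀ K : Matrix (Fin n) (Fin m) ℝ, (postCov P R H K).IsHermitian)
    (Q : MvPolynomial (Fin n) ℝ) (hQ : Q.IsSymmetric) :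
    fderiv ℝ (fun K : Matrix (Fin n) (Fin m) ℝ =>
        MvPolynomial.eval (fun i => (hPK K).eigenvalues i) Q)
      (kalmanGain P R H) = 0 := by
  classical
  -- representation of Q by a polynomial in elementary symmetric polynomials
  obtain ⟨q, hq⟩ := MvPolynomial.esymmAlgHom_surjective (σ := Fin n) (R := ℝ) (n := n)
    (by simp) ⟨Q, (MvPolynomial.mem_symmetricSubalgebra Q).mpr hQ⟩
  have hQrep : MvPolynomial.aeval
      (fun i : Fin n => MvPolynomial.esymm (Fin n) ℝ (i + 1)) q = Q := by
    have := MvPolynomial.esymmAlgHom_apply (σ := Fin n) (R := ℝ) (n := n) q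
    rw [hq] at this
    exact this.symm
  -- the smooth surrogate function g
  set g : Matrix (Fin n) (Fin n) ℝ → ℝ := fun A =>
    MvPolynomial.eval (fun i : Fin n => (-1 : ℝ) ^ ((i : ℕ) + 1) *
      ∑ t : Fin (n + 1), ((t : ℝ) • (1 : Matrix (Fin n) (Fin n) ℝ) - A).det
        * lagW n (n - ((i : ℕ) + 1)) t) q with hg
  have hgdiff : Differentiable ℝ g := by
    apply diff_mv_eval_aux
    intro i
    apply Differentiable.const_mul
    apply Differentiable.fun_sum
    intro t _
    exact (diff_det_affine_aux _).mul_const _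
  -- g agrees with the eigenvalue function
  have hfactor : ∀ K : Matrix (Fin n) (Fin m) ℝ,
      MvPolynomial.eval (fun i => (hPK K).eigenvalues i) Q = g (postCov P R H K) := by
    intro K
    set lam : Fin n → ℝ := (hPK K).eigenvalues with hlam
    have hc : ∀ i : Fin n, ((-1 : ℝ) ^ ((i : ℕ) + 1) *
        ∑ t : Fin (n + 1), ((t : ℝ) • (1 : Matrix (Fin n) (Fin n) ℝ) - postCov P R H K).det
          * lagW n (n - ((i : ℕ) + 1)) t)
        = MvPolynomial.eval lam (MvPolynomial.esymm (Fin n) ℝ ((i : ℕ) + 1)) := by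
      intro i
      have hsum : (∑ t : Fin (n + 1),
          ((t : ℝ) • (1 : Matrix (Fin n) (Fin n) ℝ) - postCov P R H K).det
            * lagW n (n - ((i : ℕ) + 1)) t)
          = (∏ j, (X + C (-(lam j))) : ℝ[X]).coeff (n - ((i : ℕ) + 1)) := by
        rw [coeff_eq_lagW _ (degree_prodXsub lam)]
        refine Finset.sum_congr rfl fun t _ => ?_
        rw [eval_prodXsub, det_affine_eq_prod_aux (hPK K)]
      rw [hsum, coeff_prodXsub lam (by exact_mod_cast i.isLt), ← mul_assoc, ← pow_add,
        Even.neg_one_pow ⟨(i : ℕ) + 1, rfl⟩, one_mul]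
    rw [hg]
    simp only []
    rw [funext hc, ← hQrep, eval_aeval_aux]
  -- derivative of postCov is zero at the Kalman gain
  have hpc : HasFDerivAt (postCov P R H)
      (0 : Matrix (Fin n) (Fin m) ℝ →L[ℝ] Matrix (Fin n) (Fin n) ℝ) (kalmanGain P R H) := by
    have hq2 := (hasFDerivAt_quad_aux (H * P * Hᵀ + R) (kalmanGain P R H)).const_add
      (postCov P R H (kalmanGain P R H))
    have : postCov P R H = fun K => postCov P R H (kalmanGain P R H) +
        (K - kalmanGain P R H) * (H * P * Hᵀ + R) * (K - kalmanGain P R H)ᵀ :=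
      funext (postCov_eq_aux P R H hP hR)
    rw [this]
    exact hq2
  -- chain rule
  have hgd : HasFDerivAt g (fderiv ℝ g (postCov P R H (kalmanGain P R H)))
      (postCov P R H (kalmanGain P R H)) :=
    (hgdiff _).hasFDerivAt
  have hcomp := hgd.comp (kalmanGain P R H) hpc
  have hcomp := hcomp.congr_fderiv (ContinuousLinearMap.comp_zero _)
  have hfun : (fun K : Matrix (Fin n) (Fin m) ℝ =>
      MvPolynomial.eval (fun i => (hPK K).eigenvalues i) Q)
      = fun K => g (postCov P R H K) := funext hfactor
  rw [hfun]
  exact hcomp.fderiv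
end
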